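/- arXiv:2306.06957 — 7 statements merged into one kernel-verified Lean document; each statement's English description precedes it below -/
import Mathlib

section
/- Let n ≥ 1 be an integer and R = R(n). Then: (1) R has nilpotency class exactly 2; (2) the exponent of R equals 2^{n+1}; (3) the center of R equals the commutator subgroup of R, and this subgroup is cyclic of order 2^n; (4) the quotient of R by its commutator subgroup is isomorphic to the direct product of two cyclic groups of order 2^n. -/
/-- The relators of the presented group `R(n)`: generators `a = of 0`, `b = of 1`,
relators `a^(2^(n+1))`, `b^(2^(n+1))`, `a^(2^n) ([a,b]^(2^(n-1)))⁻¹`,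
`b^(2^n) ([a,b]^(2^(n-1)))⁻¹`, `[a,[a,b]]`, `[b,[a,b]]`, where `[x,y] = x⁻¹y⁻¹xy`. -/
def Rrels (n : ℕ) : Set (FreeGroup (Fin 2)) :=
  let a : FreeGroup (Fin 2) := FreeGroup.of 0
  let b : FreeGroup (Fin 2) := FreeGroup.of 1
  let c : FreeGroup (Fin 2) := a⁻¹ * b⁻¹ * a * b
  {a ^ 2 ^ (n + 1), b ^ 2 ^ (n + 1), a ^ 2 ^ n * (c ^ 2 ^ (n - 1))⁻¹,
    b ^ 2 ^ n * (c ^ 2 ^ (n - 1))⁻¹, a⁻¹ * c⁻¹ * a * c, b⁻¹ * c⁻¹ * b * c}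

/-- The group `R(n)`. -/
def Rgrp (n : ℕ) : Type := PresentedGroup (Rrels n)

noncomputable instance (n : ℕ) : Group (Rgrp n) :=
  inferInstanceAs (Group (PresentedGroup (Rrels n)))



@[ext] structure HG (p : ℕ) where
  x : ZMod (2^(p+2))
  y : ZMod (2^(p+2))
  z : ZMod (2^(p+1))

namespace HG
variable {p : ℕ}

def rh (p : ℕ) : ZMod (2^(p+2)) →+* ZMod (2^(p+1)) :=
  ZMod.castHom (pow_dvd_pow 2 (by omega : p+1 ≤ p+2)) _

instance : Mul (HG p) := ⟨fun u v => ⟨u.x + v.x, u.y + v.y, u.z + v.z + rh p u.y * rh p v.x⟩⟩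
instance : One (HG p) := ⟨⟨0, 0, 0⟩⟩
instance : Inv (HG p) := ⟨fun u => ⟨-u.x, -u.y, -u.z + rh p u.y * rh p u.x⟩⟩

@[simp] lemma mul_x (u v : HG p) : (u * v).x = u.x + v.x := rfl
@[simp] lemma mul_y (u v : HG p) : (u * v).y = u.y + v.y := rfl
@[simp] lemma mul_z (u v : HG p) : (u * v).z = u.z + v.z + rh p u.y * rh p v.x := rfl
@[simp] lemma one_x : (1 : HG p).x = 0 := rfl
@[simp] lemma one_y : (1 : HG p).y = 0 := rfl
@[simp] lemma one_z : (1 : HG p).z = 0 := rfl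
@[simp] lemma inv_x (u : HG p) : (u⁻¹).x = -u.x := rfl
@[simp] lemma inv_y (u : HG p) : (u⁻¹).y = -u.y := rfl
@[simp] lemma inv_z (u : HG p) : (u⁻¹).z = -u.z + rh p u.y * rh p u.x := rfl

instance : Group (HG p) where
  mul_assoc u v w := by refine HG.ext ?_ ?_ ?_ <;> simp <;> ring
  one_mul u := by refine HG.ext ?_ ?_ ?_ <;> simp
  mul_one u := by refine HG.ext ?_ ?_ ?_ <;> simp
  inv_mul_cancel u := by refine HG.ext ?_ ?_ ?_ <;> simp <;> ring

lemma pow_def (u : HG p) (m : ℕ) :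
    u ^ m = ⟨(m : ZMod (2^(p+2))) * u.x, (m : ZMod (2^(p+2))) * u.y,
      (m : ZMod (2^(p+1))) * u.z + (m.choose 2 : ZMod (2^(p+1))) * (rh p u.y * rh p u.x)⟩ := by
  induction m with
  | zero => refine HG.ext ?_ ?_ ?_ <;> simp
  | succ m ih =>
    rw [pow_succ, ih]
    refine HG.ext ?_ ?_ ?_ <;> simp [Nat.choose_succ_succ] <;> push_cast <;> ring

@[simp] lemma zs_self : ((2:ZMod (2^(p+1))))^(p+1) = 0 := by
  have : ((2^(p+1) : ℕ) : ZMod (2^(p+1))) = 0 := ZMod.natCast_self _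
  push_cast at this; exact this

@[simp] lemma rh_two : rh p (2 : ZMod (2^(p+2))) = 2 := map_ofNat _ _

lemma rh_big : rh p (((2^(p+1) : ℕ) : ZMod (2^(p+2)))) = 0 := by
  rw [map_natCast]; exact ZMod.natCast_self _

lemma rh_bigz (t : ℤ) : rh p (((2^(p+1) * t : ℤ) : ZMod (2^(p+2)))) = 0 := by
  rw [map_intCast]; push_cast; rw [zs_self]; ring

/-- the two central relator elements -/
def za (p : ℕ) : HG p := ⟨(2^(p+1) : ℕ), 0, (2^p : ℕ)⟩
def zb (p : ℕ) : HG p := ⟨0, (2^(p+1) : ℕ), (2^p : ℕ)⟩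

lemma za_mem_center : za p ∈ Subgroup.center (HG p) := by
  rw [Subgroup.mem_center_iff]
  intro g
  refine HG.ext ?_ ?_ ?_ <;> simp [za] <;> ring
lemma zb_mem_center : zb p ∈ Subgroup.center (HG p) := by
  rw [Subgroup.mem_center_iff]
  intro g
  refine HG.ext ?_ ?_ ?_ <;> simp [zb] <;> ring

def Zc (p : ℕ) : Subgroup (HG p) := Subgroup.closure {za p, zb p}

lemma Zc_le_center : Zc p ≤ Subgroup.center (HG p) := by
  rw [Zc, Subgroup.closure_le]
  rintro g (rfl | rfl)
  · exact za_mem_center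
  · exact zb_mem_center

instance : (Zc p).Normal := ⟨fun h hh g => by
  have hc := Subgroup.mem_center_iff.mp (Zc_le_center hh) g
  rw [hc, mul_inv_cancel_right]
  exact hh⟩

/-- a subgroup containing `Zc` used for kernel computations -/
def W (p : ℕ) : Subgroup (HG p) where
  carrier := {v | ∃ s t : ℤ, v.x = ((2^(p+1) * s : ℤ) : ZMod (2^(p+2)))
      ∧ v.y = ((2^(p+1) * t : ℤ) : ZMod (2^(p+2)))
      ∧ v.z = ((2^p * (s + t) : ℤ) : ZMod (2^(p+1)))}
  one_mem' := ⟨0, 0, by simp⟩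
  mul_mem' := by
    rintro u v ⟨s, t, hx, hy, hz⟩ ⟨s', t', hx', hy', hz'⟩
    have h1 : rh p u.y = 0 := by rw [hy]; exact rh_bigz t
    have h2 : rh p v.x = 0 := by rw [hx']; exact rh_bigz s'
    refine ⟨s + s', t + t', ?_, ?_, ?_⟩
    · simp only [mul_x]; rw [hx, hx']; push_cast; ring
    · simp only [mul_y]; rw [hy, hy']; push_cast; ring
    · simp only [mul_z, h1, h2, mul_zero, zero_mul, add_zero]
      rw [hz, hz']; push_cast; ring
  inv_mem' := by
    rintro u ⟨s, t, hx, hy, hz⟩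
    have h1 : rh p u.y = 0 := by rw [hy]; exact rh_bigz t
    refine ⟨-s, -t, ?_, ?_, ?_⟩
    · simp [hx]; try { push_cast; ring }
    · simp [hy]; try { push_cast; ring }
    · simp only [inv_z, h1, zero_mul, mul_zero, add_zero]
      rw [hz]; push_cast; ring

lemma Zc_le_W : Zc p ≤ W p := by
  rw [Zc, Subgroup.closure_le]
  rintro g (rfl | rfl)
  · exact ⟨1, 0, by refine ⟨?_, ?_, ?_⟩ <;> simp [za] <;> push_cast <;> ring⟩
  · exact ⟨0, 1, by refine ⟨?_, ?_, ?_⟩ <;> simp [zb] <;> push_cast <;> ring⟩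

lemma eq_zero_of_mem_W {i j k : ℕ} (hi : i < 2^(p+1)) (hj : j < 2^(p+1)) (hk : k < 2^(p+1))
    (h : (⟨(i : ZMod (2^(p+2))), (j : ZMod (2^(p+2))), -(k : ZMod (2^(p+1)))⟩ : HG p) ∈ W p) :
    i = 0 ∧ j = 0 ∧ k = 0 := by
  obtain ⟨s, t, hx, hy, hz⟩ := h
  have key : ∀ (i : ℕ) (s : ℤ), i < 2^(p+1) →
      ((i : ℕ) : ZMod (2^(p+2))) = ((2^(p+1) * s : ℤ) : ZMod (2^(p+2))) →
      i = 0 ∧ ∃ u : ℤ, s = 2*u := by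
    intro i s hilt hcast
    have hdvd : ((2:ℤ)^(p+2)) ∣ ((i:ℤ) - 2^(p+1)*s) := by
      have := (ZMod.intCast_zmod_eq_zero_iff_dvd ((i:ℤ) - 2^(p+1)*s) (2^(p+2))).mp (by
        push_cast
        rw [sub_eq_zero]
        push_cast at hcast ⊢
        exact hcast)
      exact_mod_cast this
    obtain ⟨u, hu⟩ := hdvd
    have h2 : (2:ℤ)^(p+2) = 2*2^(p+1) := by ring
    have hiv : (i:ℤ) = 2^(p+1) * (s + 2*u) := by rw [h2] at hu; linarith
    have hvz : s + 2*u = 0 := by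
      have hpos : (0:ℤ) < 2^(p+1) := by positivity
      have hnn : (0:ℤ) ≤ (i:ℤ) := Int.natCast_nonneg i
      have hlt : (i:ℤ) < 2^(p+1) := by exact_mod_cast hilt
      rcases lt_trichotomy (s + 2*u) 0 with h | h | h
      · nlinarith
      · exact h
      · nlinarith
    constructor
    · have : (i:ℤ) = 0 := by rw [hiv, hvz]; ring
      exact_mod_cast this
    · exact ⟨-u, by linarith⟩
  obtain ⟨hi0, u, hsu⟩ := key i s hi hx
  obtain ⟨hj0, w, htw⟩ := key j t hj hy
  refine ⟨hi0, hj0, ?_⟩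
  have hdvd : ((2:ℤ)^(p+1)) ∣ (-(k:ℤ) - 2^p*(s+t)) := by
    have := (ZMod.intCast_zmod_eq_zero_iff_dvd (-(k:ℤ) - 2^p*(s+t)) (2^(p+1))).mp (by
      push_cast
      rw [sub_eq_zero]
      push_cast at hz ⊢
      exact hz)
    exact_mod_cast this
  have hdk : ((2:ℤ)^(p+1)) ∣ (k:ℤ) := by
    obtain ⟨v, hv⟩ := hdvd
    refine ⟨-(v + u + w), ?_⟩
    rw [hsu, htw] at hv
    have h2 : (2:ℤ)^(p+1) = 2*2^p := by ring
    rw [h2] at hv ⊢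
    linarith
  have : (2^(p+1) : ℕ) ∣ k := by exact_mod_cast hdk
  exact Nat.eq_zero_of_dvd_of_lt this hk

end HG


section Class2
variable {G : Type*} [Group G] {a b c : G}

lemma cl2_conj_b (hac : Commute a c) (hbc : Commute b c) (hba : b * a = a * b * c⁻¹)
    (i : ℤ) : b * a^i * b⁻¹ = a^i * c^(-i) := by
  have h1 : b * a * b⁻¹ = a * c⁻¹ := by
    rw [hba]
    calc a*b*c⁻¹*b⁻¹ = a * (b*c⁻¹*b⁻¹) := by group
    _ = a * c⁻¹ := by rw [hbc.inv_right.eq]; group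
  have h2 : b * a^i * b⁻¹ = (b*a*b⁻¹)^i := by
    rw [show b*a*b⁻¹ = (MulAut.conj b) a from rfl, ← map_zpow]
    rfl
  rw [h2, h1, hac.inv_right.mul_zpow, inv_zpow, zpow_neg]

lemma cl2_conj_binv (hac : Commute a c) (hbc : Commute b c) (hba : b * a = a * b * c⁻¹)
    (i : ℤ) : b⁻¹ * a^i * b = a^i * c^i := by
  have h0 : a * b = b * (a * c) := by rw [show b * (a*c) = (b*a)*c from by group, hba]; group
  have h1 : b⁻¹ * a * b = a * c := by
    calc b⁻¹*a*b = b⁻¹*(a*b) := by group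
    _ = b⁻¹*(b*(a*c)) := by rw [h0]
    _ = a*c := by group
  have h2 : b⁻¹ * a^i * b = (b⁻¹*a*b)^i := by
    rw [show b⁻¹*a*b = (MulAut.conj b⁻¹) a from by simp [MulAut.conj_apply], ← map_zpow]
    simp [MulAut.conj_apply]
  rw [h2, h1, hac.mul_zpow]

lemma cl2_conj_bj (hac : Commute a c) (hbc : Commute b c) (hba : b * a = a * b * c⁻¹)
    (j i : ℤ) : b^j * a^i * b^(-j) = a^i * c^(-(i*j)) := by
  have hcfix : ∀ m : ℤ, b * c^m * b⁻¹ = c^m := fun m => by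
    rw [(hbc.zpow_right m).eq]; group
  have hcfix' : ∀ m : ℤ, b⁻¹ * c^m * b = c^m := fun m => by
    rw [((hbc.zpow_right m).inv_left.eq)]; group
  induction j using Int.induction_on with
  | zero => simp
  | succ j ih =>
    have e1 : b^((j:ℤ)+1) = b * b^(j:ℤ) := by
      rw [show ((j:ℤ)+1) = 1 + (j:ℤ) by ring, zpow_add, zpow_one]
    have e2 : b^(-((j:ℤ)+1)) = b^(-(j:ℤ)) * b⁻¹ := by
      rw [← zpow_neg_one, ← zpow_add]; ring_nf
    calc b^((j:ℤ)+1) * a^i * b^(-((j:ℤ)+1))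
        = b * (b^(j:ℤ) * a^i * b^(-(j:ℤ))) * b⁻¹ := by rw [e1, e2]; group
      _ = b * (a^i * c^(-(i*j))) * b⁻¹ := by rw [ih]
      _ = (b * a^i * b⁻¹) * (b * c^(-(i*j)) * b⁻¹) := by group
      _ = (a^i * c^(-i)) * c^(-(i*j)) := by rw [cl2_conj_b hac hbc hba, hcfix]
      _ = a^i * c^(-(i*((j:ℤ)+1))) := by rw [mul_assoc, ← zpow_add]; congr 1; ring
  | pred j ih =>
    have e1 : b^(-(j:ℤ)-1) = b⁻¹ * b^(-(j:ℤ)) := by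
      rw [← zpow_neg_one, ← zpow_add]; ring_nf
    have e2 : b^(-(-(j:ℤ)-1)) = b^((j:ℤ)) * b := by
      rw [show (-(-(j:ℤ)-1)) = (j:ℤ)+1 by ring, zpow_add_one]
    have e3 : b^(-(-(j:ℤ))) = b^((j:ℤ)) := by norm_num
    calc b^(-(j:ℤ)-1) * a^i * b^(-(-(j:ℤ)-1))
        = b⁻¹ * (b^(-(j:ℤ)) * a^i * b^((j:ℤ))) * b := by rw [e1, e2]; group
      _ = b⁻¹ * (b^(-(j:ℤ)) * a^i * b^(-(-(j:ℤ)))) * b := by rw [e3]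
      _ = b⁻¹ * (a^i * c^(-(i * -(j:ℤ)))) * b := by rw [ih]
      _ = (b⁻¹ * a^i * b) * (b⁻¹ * c^(-(i * -(j:ℤ))) * b) := by group
      _ = (a^i * c^i) * c^(-(i * -(j:ℤ))) := by rw [cl2_conj_binv hac hbc hba, hcfix']
      _ = a^i * c^(-(i*(-(j:ℤ)-1))) := by rw [mul_assoc, ← zpow_add]; congr 1; ring

lemma cl2_swap (hac : Commute a c) (hbc : Commute b c) (hba : b * a = a * b * c⁻¹)
    (j i : ℤ) : b^j * a^i = a^i * b^j * c^(-(i*j)) := by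
  have h := cl2_conj_bj hac hbc hba j i
  have hcb : ∀ m : ℤ, c^m * b^j = b^j * c^m := fun m => ((hbc.symm.zpow_zpow m j).eq)
  calc b^j * a^i = (b^j * a^i * b^(-j)) * b^j := by group
    _ = (a^i * c^(-(i*j))) * b^j := by rw [h]
    _ = a^i * (c^(-(i*j)) * b^j) := by group
    _ = a^i * (b^j * c^(-(i*j))) := by rw [hcb]
    _ = a^i * b^j * c^(-(i*j)) := by group

lemma cl2_mul_nf (hac : Commute a c) (hbc : Commute b c) (hba : b * a = a * b * c⁻¹)
    (i j k i' j' k' : ℤ) :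
    (a^i * b^j * c^k) * (a^i' * b^j' * c^k') =
      a^(i+i') * b^(j+j') * c^(k+k'-i'*j) := by
  have hca : ∀ m l : ℤ, c^m * a^l = a^l * c^m := fun m l => ((hac.symm.zpow_zpow m l).eq)
  have hcb : ∀ m l : ℤ, c^m * b^l = b^l * c^m := fun m l => ((hbc.symm.zpow_zpow m l).eq)
  calc (a^i * b^j * c^k) * (a^i' * b^j' * c^k')
      = a^i * b^j * (c^k * a^i') * (b^j' * c^k') := by group
    _ = a^i * b^j * (a^i' * c^k) * (b^j' * c^k') := by rw [hca]
    _ = a^i * (b^j * a^i') * ((c^k * b^j') * c^k') := by group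
    _ = a^i * (a^i' * b^j * c^(-(i'*j))) * ((b^j' * c^k) * c^k') := by
        rw [cl2_swap hac hbc hba, hcb]
    _ = (a^i * a^i') * b^j * ((c^(-(i'*j)) * b^j') * (c^k * c^k')) := by group
    _ = (a^i * a^i') * b^j * ((b^j' * c^(-(i'*j))) * (c^k * c^k')) := by rw [hcb]
    _ = (a^i * a^i') * (b^j * b^j') * (c^(-(i'*j)) * (c^k * c^k')) := by group
    _ = a^(i+i') * b^(j+j') * c^(k+k'-i'*j) := by
        rw [← zpow_add, ← zpow_add, ← zpow_add, ← zpow_add]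
        congr 1
        ring

lemma cl2_inv_nf (hac : Commute a c) (hbc : Commute b c) (hba : b * a = a * b * c⁻¹)
    (i j k : ℤ) :
    (a^i * b^j * c^k)⁻¹ = a^(-i) * b^(-j) * c^(-k-i*j) := by
  apply inv_eq_of_mul_eq_one_right
  rw [cl2_mul_nf hac hbc hba, show i + -i = 0 by ring, show j + -j = 0 by ring,
    show k + (-k - i * j) - -i * j = 0 by ring]
  simp

end Class2

namespace RW
open scoped commutatorElement
variable (n : ℕ)

abbrev P (n : ℕ) := PresentedGroup (Rrels n)

def A : P n := PresentedGroup.of 0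
def B : P n := PresentedGroup.of 1
def C : P n := (A n)⁻¹ * (B n)⁻¹ * A n * B n

lemma rel_one {r : FreeGroup (Fin 2)} (hr : r ∈ Rrels n) :
    PresentedGroup.mk (Rrels n) r = 1 :=
  (QuotientGroup.eq_one_iff r).mpr (Subgroup.subset_normalClosure hr)

lemma mk_c : PresentedGroup.mk (Rrels n)
    ((FreeGroup.of 0)⁻¹ * (FreeGroup.of 1)⁻¹ * FreeGroup.of 0 * FreeGroup.of 1) = C n := by
  simp only [map_mul, map_inv]
  rfl

lemma hA2 : (A n) ^ (2^(n+1)) = 1 := by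
  have := rel_one n (show (FreeGroup.of 0 : FreeGroup (Fin 2)) ^ 2^(n+1) ∈ Rrels n by
    simp [Rrels])
  rw [map_pow] at this
  exact this

lemma hB2 : (B n) ^ (2^(n+1)) = 1 := by
  have := rel_one n (show (FreeGroup.of 1 : FreeGroup (Fin 2)) ^ 2^(n+1) ∈ Rrels n by
    simp [Rrels])
  rw [map_pow] at this
  exact this

lemma hAC : (A n) ^ (2^n) = (C n) ^ (2^(n-1)) := by
  have := rel_one n (show (FreeGroup.of 0 : FreeGroup (Fin 2)) ^ 2^n *
      (((FreeGroup.of 0)⁻¹ * (FreeGroup.of 1)⁻¹ * FreeGroup.of 0 * FreeGroup.of 1 :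
        FreeGroup (Fin 2)) ^ 2^(n-1))⁻¹ ∈ Rrels n by simp [Rrels])
  rw [map_mul, map_inv, map_pow, map_pow, mk_c] at this
  have h := mul_inv_eq_one.mp this
  exact h

lemma hBC : (B n) ^ (2^n) = (C n) ^ (2^(n-1)) := by
  have := rel_one n (show (FreeGroup.of 1 : FreeGroup (Fin 2)) ^ 2^n *
      (((FreeGroup.of 0)⁻¹ * (FreeGroup.of 1)⁻¹ * FreeGroup.of 0 * FreeGroup.of 1 :
        FreeGroup (Fin 2)) ^ 2^(n-1))⁻¹ ∈ Rrels n by simp [Rrels])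
  rw [map_mul, map_inv, map_pow, map_pow, mk_c] at this
  exact mul_inv_eq_one.mp this

lemma commAC : Commute (A n) (C n) := by
  have := rel_one n (show ((FreeGroup.of 0)⁻¹ *
      ((FreeGroup.of 0)⁻¹ * (FreeGroup.of 1)⁻¹ * FreeGroup.of 0 * FreeGroup.of 1)⁻¹ *
      FreeGroup.of 0 *
      ((FreeGroup.of 0)⁻¹ * (FreeGroup.of 1)⁻¹ * FreeGroup.of 0 * FreeGroup.of 1) :
      FreeGroup (Fin 2)) ∈ Rrels n by simp [Rrels])
  simp only [map_mul, map_inv, mk_c] at this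
  have h : (A n)⁻¹ * (C n)⁻¹ * A n * C n = 1 := by
    rw [← this]; rfl
  have := commutatorElement_eq_one_iff_commute.mp (show ⁅(A n)⁻¹, (C n)⁻¹⁆ = 1 by
    rw [commutatorElement_def, inv_inv, inv_inv]; exact h)
  simpa using this.inv_inv

lemma commBC : Commute (B n) (C n) := by
  have := rel_one n (show ((FreeGroup.of 1)⁻¹ *
      ((FreeGroup.of 0)⁻¹ * (FreeGroup.of 1)⁻¹ * FreeGroup.of 0 * FreeGroup.of 1)⁻¹ *
      FreeGroup.of 1 *
      ((FreeGroup.of 0)⁻¹ * (FreeGroup.of 1)⁻¹ * FreeGroup.of 0 * FreeGroup.of 1) :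
      FreeGroup (Fin 2)) ∈ Rrels n by simp [Rrels])
  simp only [map_mul, map_inv, mk_c] at this
  have h : (B n)⁻¹ * (C n)⁻¹ * B n * C n = 1 := by
    rw [← this]; rfl
  have := commutatorElement_eq_one_iff_commute.mp (show ⁅(B n)⁻¹, (C n)⁻¹⁆ = 1 by
    rw [commutatorElement_def, inv_inv, inv_inv]; exact h)
  simpa using this.inv_inv

lemma Ccentral : ∀ g : P n, Commute (C n) g := by
  intro g
  have hg : g ∈ Subgroup.centralizer {C n} := by
    apply PresentedGroup.generated_by
    intro x
    rw [Subgroup.mem_centralizer_iff]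
    rintro h rfl
    fin_cases x
    · exact (commAC n).symm.eq
    · exact (commBC n).symm.eq
  exact Subgroup.mem_centralizer_iff.mp hg (C n) rfl



lemma hba (n : ℕ) : B n * A n = A n * B n * (C n)⁻¹ := by rw [C]; group

def TS (n : ℕ) : Subgroup (P n) where
  carrier := {g | ∃ i j k : ℤ, g = (A n)^i * (B n)^j * (C n)^k}
  one_mem' := ⟨0, 0, 0, by simp⟩
  mul_mem' := by
    rintro u v ⟨i, j, k, rfl⟩ ⟨i', j', k', rfl⟩
    exact ⟨i+i', j+j', k+k'-i'*j, cl2_mul_nf (commAC n) (commBC n) (hba n) i j k i' j' k'⟩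
  inv_mem' := by
    rintro u ⟨i, j, k, rfl⟩
    exact ⟨-i, -j, -k-i*j, cl2_inv_nf (commAC n) (commBC n) (hba n) i j k⟩

lemma nf_int (n : ℕ) (g : P n) : ∃ i j k : ℤ, g = (A n)^i * (B n)^j * (C n)^k := by
  refine PresentedGroup.generated_by _ (TS n) (fun x => ?_) g
  fin_cases x
  · exact ⟨1, 0, 0, by simp [A]⟩
  · exact ⟨0, 1, 0, by simp [B]⟩

lemma hC2 (n : ℕ) (hn : 1 ≤ n) : (C n)^(2^n) = 1 := by
  obtain ⟨m, rfl⟩ : ∃ m, n = m + 1 := ⟨n - 1, by omega⟩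
  have h1 : 2^(m+1-1) * 2 = 2^(m+1) := by simp [pow_succ]
  calc (C (m+1))^(2^(m+1)) = ((C (m+1))^(2^(m+1-1)))^2 := by rw [← pow_mul, h1]
    _ = ((A (m+1))^(2^(m+1)))^2 := by rw [hAC]
    _ = (A (m+1))^(2^(m+1+1)) := by rw [← pow_mul, pow_succ 2 (m+1)]
    _ = 1 := hA2 (m+1)

lemma hACz (n : ℕ) : (A n)^((2^n : ℕ) : ℤ) = (C n)^((2^(n-1) : ℕ) : ℤ) := by
  rw [zpow_natCast, zpow_natCast]; exact hAC n
lemma hBCz (n : ℕ) : (B n)^((2^n : ℕ) : ℤ) = (C n)^((2^(n-1) : ℕ) : ℤ) := by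
  rw [zpow_natCast, zpow_natCast]; exact hBC n
lemma hC2z (n : ℕ) (hn : 1 ≤ n) : (C n)^((2^n : ℕ) : ℤ) = 1 := by
  rw [zpow_natCast]; exact hC2 n hn

lemma redA (n : ℕ) (I : ℤ) :
    ∃ (r : ℕ) (s : ℤ), r < 2^n ∧ (A n)^I = (A n)^(r : ℤ) * (C n)^s := by
  have hNpos : (0:ℤ) < ((2^n : ℕ) : ℤ) := by positivity
  have hmodnn := Int.emod_nonneg I (by positivity : ((2^n : ℕ) : ℤ) ≠ 0)
  have hmodlt := Int.emod_lt_of_pos I hNpos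
  refine ⟨(I % ((2^n : ℕ) : ℤ)).toNat, ((2^(n-1) : ℕ) : ℤ) * (I / ((2^n : ℕ) : ℤ)), ?_, ?_⟩
  · omega
  · have hsplit : I = ((2^n : ℕ) : ℤ) * (I / ((2^n : ℕ) : ℤ)) + I % ((2^n : ℕ) : ℤ) :=
      (Int.mul_ediv_add_emod I _).symm
    calc (A n)^I = (A n)^(((2^n : ℕ) : ℤ) * (I / ((2^n : ℕ) : ℤ))) * (A n)^(I % ((2^n : ℕ) : ℤ)) := by
          rw [← zpow_add, ← hsplit]
      _ = ((A n)^((2^n : ℕ) : ℤ))^(I / ((2^n : ℕ) : ℤ)) * (A n)^(I % ((2^n : ℕ) : ℤ)) := by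
          rw [← zpow_mul]
      _ = ((C n)^((2^(n-1) : ℕ) : ℤ))^(I / ((2^n : ℕ) : ℤ)) * (A n)^(I % ((2^n : ℕ) : ℤ)) := by
          rw [hACz]
      _ = (C n)^(((2^(n-1) : ℕ) : ℤ) * (I / ((2^n : ℕ) : ℤ))) * (A n)^(I % ((2^n : ℕ) : ℤ)) := by
          rw [← zpow_mul]
      _ = (A n)^(I % ((2^n : ℕ) : ℤ)) * (C n)^(((2^(n-1) : ℕ) : ℤ) * (I / ((2^n : ℕ) : ℤ))) := by
          exact ((Ccentral n _).zpow_left _).eq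
      _ = (A n)^(((I % ((2^n : ℕ) : ℤ)).toNat : ℤ)) *
            (C n)^(((2^(n-1) : ℕ) : ℤ) * (I / ((2^n : ℕ) : ℤ))) := by
          rw [Int.toNat_of_nonneg hmodnn]

lemma redB (n : ℕ) (I : ℤ) :
    ∃ (r : ℕ) (s : ℤ), r < 2^n ∧ (B n)^I = (B n)^(r : ℤ) * (C n)^s := by
  have hNpos : (0:ℤ) < ((2^n : ℕ) : ℤ) := by positivity
  have hmodnn := Int.emod_nonneg I (by positivity : ((2^n : ℕ) : ℤ) ≠ 0)
  have hmodlt := Int.emod_lt_of_pos I hNpos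
  refine ⟨(I % ((2^n : ℕ) : ℤ)).toNat, ((2^(n-1) : ℕ) : ℤ) * (I / ((2^n : ℕ) : ℤ)), ?_, ?_⟩
  · omega
  · have hsplit : I = ((2^n : ℕ) : ℤ) * (I / ((2^n : ℕ) : ℤ)) + I % ((2^n : ℕ) : ℤ) :=
      (Int.mul_ediv_add_emod I _).symm
    calc (B n)^I = (B n)^(((2^n : ℕ) : ℤ) * (I / ((2^n : ℕ) : ℤ))) * (B n)^(I % ((2^n : ℕ) : ℤ)) := by
          rw [← zpow_add, ← hsplit]
      _ = ((B n)^((2^n : ℕ) : ℤ))^(I / ((2^n : ℕ) : ℤ)) * (B n)^(I % ((2^n : ℕ) : ℤ)) := by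
          rw [← zpow_mul]
      _ = ((C n)^((2^(n-1) : ℕ) : ℤ))^(I / ((2^n : ℕ) : ℤ)) * (B n)^(I % ((2^n : ℕ) : ℤ)) := by
          rw [hBCz]
      _ = (C n)^(((2^(n-1) : ℕ) : ℤ) * (I / ((2^n : ℕ) : ℤ))) * (B n)^(I % ((2^n : ℕ) : ℤ)) := by
          rw [← zpow_mul]
      _ = (B n)^(I % ((2^n : ℕ) : ℤ)) * (C n)^(((2^(n-1) : ℕ) : ℤ) * (I / ((2^n : ℕ) : ℤ))) := by
          exact ((Ccentral n _).zpow_left _).eq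
      _ = (B n)^(((I % ((2^n : ℕ) : ℤ)).toNat : ℤ)) *
            (C n)^(((2^(n-1) : ℕ) : ℤ) * (I / ((2^n : ℕ) : ℤ))) := by
          rw [Int.toNat_of_nonneg hmodnn]

lemma redC (n : ℕ) (hn : 1 ≤ n) (K : ℤ) :
    ∃ k : ℕ, k < 2^n ∧ (C n)^K = (C n)^(k : ℤ) := by
  have hNpos : (0:ℤ) < ((2^n : ℕ) : ℤ) := by positivity
  have hmodnn := Int.emod_nonneg K (by positivity : ((2^n : ℕ) : ℤ) ≠ 0)
  have hmodlt := Int.emod_lt_of_pos K hNpos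
  refine ⟨(K % ((2^n : ℕ) : ℤ)).toNat, by omega, ?_⟩
  have hsplit : K = ((2^n : ℕ) : ℤ) * (K / ((2^n : ℕ) : ℤ)) + K % ((2^n : ℕ) : ℤ) :=
    (Int.mul_ediv_add_emod K _).symm
  calc (C n)^K = ((C n)^((2^n : ℕ) : ℤ))^(K / ((2^n : ℕ) : ℤ)) * (C n)^(K % ((2^n : ℕ) : ℤ)) := by
        rw [← zpow_mul, ← zpow_add, ← hsplit]
    _ = (C n)^(K % ((2^n : ℕ) : ℤ)) := by rw [hC2z n hn]; simp
    _ = (C n)^(((K % ((2^n : ℕ) : ℤ)).toNat : ℤ)) := by rw [Int.toNat_of_nonneg hmodnn]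

lemma nf (n : ℕ) (hn : 1 ≤ n) (g : P n) :
    ∃ i j k : ℕ, i < 2^n ∧ j < 2^n ∧ k < 2^n ∧
      g = (A n)^i * (B n)^j * (C n)^k := by
  obtain ⟨I, J, K, rfl⟩ := nf_int n g
  obtain ⟨r, s, hr, hA⟩ := redA n I
  obtain ⟨r', s', hr', hB⟩ := redB n J
  have e1 := cl2_mul_nf (commAC n) (commBC n) (hba n) (r:ℤ) 0 s 0 (r':ℤ) s'
  have e2 := cl2_mul_nf (commAC n) (commBC n) (hba n) ((r:ℤ)+0) (0+(r':ℤ)) (s+s'-0*0) 0 0 K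
  have key : (A n)^I * (B n)^J * (C n)^K =
      (A n)^(r:ℤ) * (B n)^(r':ℤ) * (C n)^(s+s'+K) := by
    calc (A n)^I * (B n)^J * (C n)^K
        = ((A n)^(r:ℤ) * (B n)^(0:ℤ) * (C n)^s) *
            ((A n)^(0:ℤ) * (B n)^(r':ℤ) * (C n)^s') *
            ((A n)^(0:ℤ) * (B n)^(0:ℤ) * (C n)^K) := by rw [hA, hB]; group
      _ = ((A n)^((r:ℤ)+0) * (B n)^(0+(r':ℤ)) * (C n)^(s+s'-0*0)) *
            ((A n)^(0:ℤ) * (B n)^(0:ℤ) * (C n)^K) := by rw [e1]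
      _ = (A n)^((r:ℤ)+0+0) * (B n)^(0+(r':ℤ)+0) * (C n)^(s+s'-0*0+K-0*(0+(r':ℤ))) := by
            rw [e2]
      _ = (A n)^(r:ℤ) * (B n)^(r':ℤ) * (C n)^(s+s'+K) := by norm_num
  obtain ⟨k, hk, hC⟩ := redC n hn (s+s'+K)
  refine ⟨r, r', k, hr, hr', hk, ?_⟩
  rw [key, hC, zpow_natCast, zpow_natCast, zpow_natCast]

section Phi
open HG
variable (p : ℕ)

def ea (p : ℕ) : HG p := ⟨1, 0, 0⟩
def eb (p : ℕ) : HG p := ⟨0, 1, 0⟩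
def ec (p : ℕ) : HG p := ⟨0, 0, -1⟩

lemma ea_pow (m : ℕ) : (ea p)^m = ⟨(m : ZMod (2^(p+2))), 0, 0⟩ := by
  rw [HG.pow_def]; refine HG.ext ?_ ?_ ?_ <;> simp [ea]
lemma eb_pow (m : ℕ) : (eb p)^m = ⟨0, (m : ZMod (2^(p+2))), 0⟩ := by
  rw [HG.pow_def]; refine HG.ext ?_ ?_ ?_ <;> simp [eb]
lemma ec_pow (m : ℕ) : (ec p)^m = ⟨0, 0, -(m : ZMod (2^(p+1)))⟩ := by
  rw [HG.pow_def]; refine HG.ext ?_ ?_ ?_ <;> simp [ec]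

lemma hcw : (ea p)⁻¹ * (eb p)⁻¹ * ea p * eb p = ec p := by
  refine HG.ext ?_ ?_ ?_ <;> simp [ea, eb, ec]

lemma mix (i j k : ℕ) : (ea p)^i * (eb p)^j * (ec p)^k =
    ⟨(i : ZMod (2^(p+2))), (j : ZMod (2^(p+2))), -(k : ZMod (2^(p+1)))⟩ := by
  rw [ea_pow, eb_pow, ec_pow]
  refine HG.ext ?_ ?_ ?_ <;> simp

def πq (p : ℕ) : HG p →* HG p ⧸ Zc p := QuotientGroup.mk' (Zc p)

def fgen (p : ℕ) : Fin 2 → HG p ⧸ Zc p := ![πq p (ea p), πq p (eb p)]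

lemma hrels : ∀ r ∈ Rrels (p+1), FreeGroup.lift (fgen p) r = 1 := by
  intro r hr
  have hmem : ∀ v : HG p, v ∈ Zc p → πq p v = 1 := fun v hv =>
    (QuotientGroup.eq_one_iff v).mpr hv
  simp only [Rrels, Set.mem_insert_iff, Set.mem_singleton_iff] at hr
  rcases hr with rfl | rfl | rfl | rfl | rfl | rfl <;>
    simp only [map_mul, map_inv, map_pow, FreeGroup.lift_apply_of, fgen,
      Matrix.cons_val_zero, Matrix.cons_val_one, Matrix.head_cons] <;>
    simp only [← map_inv (πq p), ← map_mul (πq p), ← map_pow (πq p)]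
  · refine hmem _ ?_
    rw [ea_pow]
    have : (⟨((2^(p+1+1) : ℕ) : ZMod (2^(p+2))), 0, 0⟩ : HG p) = 1 := by
      refine HG.ext ?_ ?_ ?_ <;> simp [ZMod.natCast_self]
    rw [this]; exact one_mem _
  · refine hmem _ ?_
    rw [eb_pow]
    have : (⟨0, ((2^(p+1+1) : ℕ) : ZMod (2^(p+2))), 0⟩ : HG p) = 1 := by
      refine HG.ext ?_ ?_ ?_ <;> simp [ZMod.natCast_self]
    rw [this]; exact one_mem _
  · refine hmem _ ?_
    rw [hcw, ea_pow, ec_pow]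
    have : (⟨((2^(p+1) : ℕ) : ZMod (2^(p+2))), 0, 0⟩ : HG p) *
        ((⟨0, 0, -((2^(p+1-1) : ℕ) : ZMod (2^(p+1)))⟩ : HG p))⁻¹ = za p := by
      refine HG.ext ?_ ?_ ?_ <;> simp [za]
    rw [this]
    exact Subgroup.subset_closure (by left; rfl)
  · refine hmem _ ?_
    rw [hcw, eb_pow, ec_pow]
    have : (⟨0, ((2^(p+1) : ℕ) : ZMod (2^(p+2))), 0⟩ : HG p) *
        ((⟨0, 0, -((2^(p+1-1) : ℕ) : ZMod (2^(p+1)))⟩ : HG p))⁻¹ = zb p := by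
      refine HG.ext ?_ ?_ ?_ <;> simp [zb]
    rw [this]
    exact Subgroup.subset_closure (by right; rfl)
  · refine hmem _ ?_
    rw [hcw]
    have : (ea p)⁻¹ * (ec p)⁻¹ * ea p * ec p = 1 := by
      refine HG.ext ?_ ?_ ?_ <;> simp [ea, ec]
    rw [this]; exact one_mem _
  · refine hmem _ ?_
    rw [hcw]
    have : (eb p)⁻¹ * (ec p)⁻¹ * eb p * ec p = 1 := by
      refine HG.ext ?_ ?_ ?_ <;> simp [eb, ec]
    rw [this]; exact one_mem _

def φ (p : ℕ) : P (p+1) →* HG p ⧸ Zc p := PresentedGroup.toGroup (hrels p)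

lemma φA : φ p (A (p+1)) = πq p (ea p) := by
  rw [A, φ, PresentedGroup.toGroup.of]
  simp [fgen]
lemma φB : φ p (B (p+1)) = πq p (eb p) := by
  rw [B, φ, PresentedGroup.toGroup.of]
  simp [fgen]
lemma φC : φ p (C (p+1)) = πq p (ec p) := by
  rw [C, map_mul, map_mul, map_mul, map_inv, map_inv, φA, φB,
    ← map_inv (πq p), ← map_inv (πq p), ← map_mul (πq p), ← map_mul (πq p), ← map_mul (πq p), hcw]

lemma φnf (i j k : ℕ) : φ p ((A (p+1))^i * (B (p+1))^j * (C (p+1))^k) =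
    πq p ⟨(i : ZMod (2^(p+2))), (j : ZMod (2^(p+2))), -(k : ZMod (2^(p+1)))⟩ := by
  rw [map_mul, map_mul, map_pow, map_pow, map_pow, φA, φB, φC,
    ← map_pow (πq p), ← map_pow (πq p), ← map_pow (πq p), ← map_mul (πq p), ← map_mul (πq p), mix]

lemma φinj : Function.Injective (φ p) := by
  rw [injective_iff_map_eq_one]
  intro g hg
  obtain ⟨i, j, k, hi, hj, hk, rfl⟩ := nf (p+1) (by omega) g
  rw [φnf] at hg
  have hmem : (⟨(i : ZMod (2^(p+2))), (j : ZMod (2^(p+2))), -(k : ZMod (2^(p+1)))⟩ : HG p)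
      ∈ W p := Zc_le_W ((QuotientGroup.eq_one_iff _).mp hg)
  obtain ⟨hi0, hj0, hk0⟩ := eq_zero_of_mem_W hi hj hk hmem
  subst hi0; subst hj0; subst hk0
  simp

lemma orderC : orderOf (C (p+1)) = 2^(p+1) := by
  have hnot : ¬ (C (p+1))^(2^p) = 1 := by
    intro h
    have h2 := congrArg (φ p) h
    rw [map_pow, φC, map_one, ← map_pow (πq p), ec_pow] at h2
    have hmem : (⟨0, 0, -((2^p : ℕ) : ZMod (2^(p+1)))⟩ : HG p) ∈ W p :=
      Zc_le_W ((QuotientGroup.eq_one_iff _).mp h2)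
    obtain ⟨_, _, hk0⟩ := eq_zero_of_mem_W (p := p) (i := 0) (j := 0) (k := 2^p)
      (by positivity) (by positivity) (Nat.pow_lt_pow_succ (by norm_num)) (by simpa using hmem)
    exact absurd hk0 (by positivity)
  exact orderOf_eq_prime_pow hnot (hC2 (p+1) (by omega))

lemma orderA : orderOf (A (p+1)) = 2^(p+2) := by
  have hnot : ¬ (A (p+1))^(2^(p+1)) = 1 := by
    intro h
    rw [hAC] at h
    have hd := orderOf_dvd_of_pow_eq_one h
    rw [orderC] at hd
    have := Nat.le_of_dvd (by positivity) hd
    simp only [Nat.add_sub_cancel] at this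
    have h2 : (2:ℕ)^p < 2^(p+1) := Nat.pow_lt_pow_succ (by norm_num)
    omega
  exact orderOf_eq_prime_pow hnot (hA2 (p+1))

lemma pow_exp_eq_one (g : P (p+1)) : g^(2^(p+2)) = 1 := by
  apply φinj p
  rw [map_pow, map_one]
  obtain ⟨v, hv⟩ := QuotientGroup.mk'_surjective (Zc p) (φ p g)
  rw [← hv, ← map_pow (QuotientGroup.mk' (Zc p))]
  have hvpow : v^(2^(p+2)) = 1 := by
    have c1 : ((2^(p+2) : ℕ) : ZMod (2^(p+1))) = 0 :=
      (ZMod.natCast_eq_zero_iff _ _).mpr (pow_dvd_pow 2 (by omega))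
    have c2 : (((2^(p+2)).choose 2 : ℕ) : ZMod (2^(p+1))) = 0 := by
      rw [Nat.choose_two_right]
      have hdiv : 2^(p+2) * (2^(p+2) - 1) / 2 = 2^(p+1) * (2^(p+2)-1) := by
        rw [show (2:ℕ)^(p+2) = 2 * 2^(p+1) by ring, mul_assoc,
          Nat.mul_div_cancel_left _ (by norm_num)]
      rw [hdiv, Nat.cast_mul, ZMod.natCast_self, zero_mul]
    rw [HG.pow_def]
    refine HG.ext ?_ ?_ ?_ <;> simp [ZMod.natCast_self, c1, c2]
  rw [hvpow, map_one]

lemma exponent_eq : Monoid.exponent (P (p+1)) = 2^(p+2) := by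
  refine Nat.dvd_antisymm ?_ ?_
  · exact Monoid.exponent_dvd_of_forall_pow_eq_one (pow_exp_eq_one p)
  · exact orderA p ▸ Monoid.order_dvd_exponent (A (p+1))

lemma comm_key (x y : P (p+1)) (m : ℤ) (hxy : x*y = y*x*(C (p+1))^m) :
    x*y*x⁻¹*y⁻¹ = (C (p+1))^m := by
  have hc := ((Ccentral (p+1) (y*x)).zpow_left m).eq
  calc x*y*x⁻¹*y⁻¹ = (x*y)*(y*x)⁻¹ := by group
    _ = (y*x*(C (p+1))^m)*(y*x)⁻¹ := by rw [hxy]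
    _ = ((C (p+1))^m * (y*x))*(y*x)⁻¹ := by rw [← hc]
    _ = (C (p+1))^m := by group

lemma commutator_eq : commutator (P (p+1)) = Subgroup.zpowers (C (p+1)) := by
  apply le_antisymm
  · rw [_root_.commutator_def, Subgroup.commutator_le]
    intro g _ h _
    obtain ⟨I, J, K, rfl⟩ := nf_int (p+1) g
    obtain ⟨I', J', K', rfl⟩ := nf_int (p+1) h
    have h1 := cl2_mul_nf (commAC (p+1)) (commBC (p+1)) (hba (p+1)) I J K I' J' K'
    have h2 := cl2_mul_nf (commAC (p+1)) (commBC (p+1)) (hba (p+1)) I' J' K' I J K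
    have key : (A (p+1)^I * B (p+1)^J * C (p+1)^K) * (A (p+1)^I' * B (p+1)^J' * C (p+1)^K') =
        ((A (p+1)^I' * B (p+1)^J' * C (p+1)^K') * (A (p+1)^I * B (p+1)^J * C (p+1)^K)) *
          (C (p+1))^(I*J' - I'*J) := by
      rw [h1, h2]
      conv_rhs => rw [mul_assoc, ← zpow_add]
      rw [show I + I' = I' + I by ring, show J + J' = J' + J by ring,
        show K + K' - I'*J = K' + K - I*J' + (I*J' - I'*J) by ring]
    rw [commutatorElement_def, comm_key p _ _ _ key]
    exact Subgroup.mem_zpowers_iff.mpr ⟨I*J' - I'*J, rfl⟩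
  · rw [Subgroup.zpowers_le]
    have hCc : C (p+1) = ⁅(A (p+1))⁻¹, (B (p+1))⁻¹⁆ := by
      rw [commutatorElement_def, inv_inv, inv_inv, C]
    rw [hCc, _root_.commutator_def]
    exact Subgroup.commutator_mem_commutator (Subgroup.mem_top _) (Subgroup.mem_top _)

lemma center_eq : Subgroup.center (P (p+1)) = Subgroup.zpowers (C (p+1)) := by
  apply le_antisymm
  · intro x hx
    obtain ⟨I, J, K, rfl⟩ := nf_int (p+1) x
    have e1 := cl2_mul_nf (commAC (p+1)) (commBC (p+1)) (hba (p+1)) I J K 1 0 0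
    have e2 := cl2_mul_nf (commAC (p+1)) (commBC (p+1)) (hba (p+1)) 1 0 0 I J K
    have e3 := cl2_mul_nf (commAC (p+1)) (commBC (p+1)) (hba (p+1)) I J K 0 1 0
    have e4 := cl2_mul_nf (commAC (p+1)) (commBC (p+1)) (hba (p+1)) 0 1 0 I J K
    simp only [zpow_zero, zpow_one, one_mul, mul_one, add_zero, zero_add, zero_mul, mul_zero,
      sub_zero] at e1 e2 e3 e4
    have hcA := Subgroup.mem_center_iff.mp hx (A (p+1))
    have hcB := Subgroup.mem_center_iff.mp hx (B (p+1))
    have heq := e2.symm.trans (hcA.trans e1)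
    rw [show (1:ℤ)+I = I+1 by ring] at heq
    have hK1 : (C (p+1))^K = (C (p+1))^(K-J) := mul_left_cancel heq
    have hCJ : (C (p+1))^J = 1 := by
      calc (C (p+1))^J = (C (p+1))^K * (C (p+1))^(J-K) := by
            rw [← zpow_add, show K + (J-K) = J by ring]
        _ = (C (p+1))^(K-J) * (C (p+1))^(J-K) := by rw [hK1]
        _ = 1 := by rw [← zpow_add, show K-J + (J-K) = 0 by ring, zpow_zero]
    have heq2 := e4.symm.trans (hcB.trans e3)
    rw [show (1:ℤ)+J = J+1 by ring] at heq2
    have hK2 : (C (p+1))^(K-I) = (C (p+1))^K := mul_left_cancel heq2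
    have hCI : (C (p+1))^I = 1 := by
      calc (C (p+1))^I = (C (p+1))^K * (C (p+1))^(I-K) := by
            rw [← zpow_add, show K + (I-K) = I by ring]
        _ = (C (p+1))^(K-I) * (C (p+1))^(I-K) := by rw [← hK2]
        _ = 1 := by rw [← zpow_add, show K-I + (I-K) = 0 by ring, zpow_zero]
    have hdI : ((2^(p+1) : ℕ) : ℤ) ∣ I := by
      have h := orderOf_dvd_iff_zpow_eq_one.mpr hCI
      rwa [orderC p] at h
    have hdJ : ((2^(p+1) : ℕ) : ℤ) ∣ J := by
      have h := orderOf_dvd_iff_zpow_eq_one.mpr hCJ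
      rwa [orderC p] at h
    obtain ⟨I₀, hI⟩ := hdI
    obtain ⟨J₀, hJ⟩ := hdJ
    refine Subgroup.mem_zpowers_iff.mpr
      ⟨((2^(p+1-1) : ℕ) : ℤ)*I₀ + ((2^(p+1-1) : ℕ) : ℤ)*J₀ + K, ?_⟩
    calc (C (p+1))^(((2^(p+1-1) : ℕ) : ℤ)*I₀ + ((2^(p+1-1) : ℕ) : ℤ)*J₀ + K)
        = ((C (p+1))^(((2^(p+1-1) : ℕ) : ℤ)))^I₀ * ((C (p+1))^(((2^(p+1-1) : ℕ) : ℤ)))^J₀ *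
            (C (p+1))^K := by rw [← zpow_mul, ← zpow_mul, ← zpow_add, ← zpow_add]
      _ = ((A (p+1))^(((2^(p+1) : ℕ) : ℤ)))^I₀ * ((B (p+1))^(((2^(p+1) : ℕ) : ℤ)))^J₀ *
            (C (p+1))^K := by rw [hACz, hBCz]
      _ = (A (p+1))^I * (B (p+1))^J * (C (p+1))^K := by
            rw [← zpow_mul, ← zpow_mul, ← hI, ← hJ]
  · rw [Subgroup.zpowers_le]
    exact Subgroup.mem_center_iff.mpr (fun g => (Ccentral (p+1) g).eq.symm)

abbrev T (p : ℕ) := Multiplicative (ZMod (2^(p+1)) × ZMod (2^(p+1)))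

def tgen (p : ℕ) : Fin 2 → T p :=
  ![Multiplicative.ofAdd (1, 0), Multiplicative.ofAdd (0, 1)]

lemma hrels2 : ∀ r ∈ Rrels (p+1), FreeGroup.lift (tgen p) r = 1 := by
  intro r hr
  have hz : ((2^(p+1+1) : ℕ) : ZMod (2^(p+1))) = 0 :=
    (ZMod.natCast_eq_zero_iff _ _).mpr (pow_dvd_pow 2 (by omega))
  have hz2 : ((2^(p+1) : ℕ) : ZMod (2^(p+1))) = 0 := ZMod.natCast_self _
  simp only [Rrels, Set.mem_insert_iff, Set.mem_singleton_iff] at hr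
  rcases hr with rfl | rfl | rfl | rfl | rfl | rfl <;>
    simp only [map_mul, map_inv, map_pow, FreeGroup.lift_apply_of, tgen,
      Matrix.cons_val_zero, Matrix.cons_val_one, Matrix.head_cons,
      ← ofAdd_neg, ← ofAdd_add, ← ofAdd_nsmul, ofAdd_eq_one, Prod.ext_iff,
      Prod.fst_add, Prod.snd_add, Prod.fst_neg, Prod.snd_neg ] <;>
    constructor <;> simp [nsmul_eq_mul, hz, hz2]

def ψ (p : ℕ) : P (p+1) →* T p := PresentedGroup.toGroup (hrels2 p)

lemma ψA : ψ p (A (p+1)) = Multiplicative.ofAdd (1, 0) := by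
  rw [A, ψ, PresentedGroup.toGroup.of]
  simp [tgen]
lemma ψB : ψ p (B (p+1)) = Multiplicative.ofAdd (0, 1) := by
  rw [B, ψ, PresentedGroup.toGroup.of]
  simp [tgen]
lemma ψC : ψ p (C (p+1)) = 1 := by
  rw [C, map_mul, map_mul, map_mul, map_inv, map_inv, ψA, ψB]
  rw [← ofAdd_neg, ← ofAdd_neg, ← ofAdd_add, ← ofAdd_add, ← ofAdd_add, ofAdd_eq_one]
  ring

lemma ψnf (i j k : ℕ) : ψ p ((A (p+1))^i * (B (p+1))^j * (C (p+1))^k) =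
    Multiplicative.ofAdd ((i : ZMod (2^(p+1))), (j : ZMod (2^(p+1)))) := by
  rw [map_mul, map_mul, map_pow, map_pow, map_pow, ψA, ψB, ψC, one_pow, mul_one,
    ← ofAdd_nsmul, ← ofAdd_nsmul, ← ofAdd_add]
  congr 1
  simp [Prod.ext_iff, nsmul_eq_mul]

lemma ψsurj : Function.Surjective (ψ p) := by
  intro t
  haveI : NeZero (2^(p+1)) := ⟨by positivity⟩
  refine ⟨(A (p+1))^((t.toAdd).1.val) * (B (p+1))^((t.toAdd).2.val) * (C (p+1))^0, ?_⟩
  rw [ψnf]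
  have h1 : (((t.toAdd).1.val : ℕ) : ZMod (2^(p+1))) = (t.toAdd).1 :=
    ZMod.natCast_rightInverse _
  have h2 : (((t.toAdd).2.val : ℕ) : ZMod (2^(p+1))) = (t.toAdd).2 :=
    ZMod.natCast_rightInverse _
  rw [h1, h2]
  rfl

lemma kerψ : (ψ p).ker = commutator (P (p+1)) := by
  apply le_antisymm
  · intro x hx
    obtain ⟨i, j, k, hi, hj, hk, rfl⟩ := nf (p+1) (by omega) x
    rw [MonoidHom.mem_ker, ψnf, ofAdd_eq_one, Prod.ext_iff] at hx
    obtain ⟨hx1, hx2⟩ := hx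
    have hi0 : i = 0 := by
      have := (ZMod.natCast_eq_zero_iff i (2^(p+1))).mp hx1
      exact Nat.eq_zero_of_dvd_of_lt this hi
    have hj0 : j = 0 := by
      have := (ZMod.natCast_eq_zero_iff j (2^(p+1))).mp hx2
      exact Nat.eq_zero_of_dvd_of_lt this hj
    subst hi0; subst hj0
    simp only [pow_zero, one_mul]
    rw [commutator_eq]
    exact Subgroup.mem_zpowers_iff.mpr ⟨(k : ℤ), by rw [zpow_natCast]⟩
  · exact Abelianization.commutator_subset_ker (ψ p)

noncomputable def iso4 (p : ℕ) : (P (p+1) ⧸ commutator (P (p+1))) ≃* T p :=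
  (QuotientGroup.quotientMulEquivOfEq (kerψ p).symm).trans
    (QuotientGroup.quotientKerEquivOfSurjective (ψ p) (ψsurj p))

lemma ucs2_top : upperCentralSeries (P (p+1)) 2 = ⊤ := by
  rw [eq_top_iff]
  intro x _
  have key : x ∈ Subgroup.upperCentralSeries (P (p+1)) (1+1) := by
    rw [mem_upperCentralSeries_succ_iff]
    intro y
    rw [upperCentralSeries_one]
    have hmem : x * y * x⁻¹ * y⁻¹ ∈ commutator (P (p+1)) := by
      rw [_root_.commutator_def]
      exact Subgroup.commutator_mem_commutator (Subgroup.mem_top _) (Subgroup.mem_top _)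
    rw [center_eq]
    rw [commutator_eq] at hmem
    exact hmem
  exact key

lemma ucs1_ne_top : upperCentralSeries (P (p+1)) 1 ≠ ⊤ := by
  show Subgroup.upperCentralSeries (P (p+1)) 1 ≠ ⊤
  rw [upperCentralSeries_one]
  intro h
  have hA : A (p+1) ∈ Subgroup.center (P (p+1)) := h.symm ▸ Subgroup.mem_top _
  have hBA : B (p+1) * A (p+1) = A (p+1) * B (p+1) :=
    Subgroup.mem_center_iff.mp hA (B (p+1))
  have hcomm : Commute (A (p+1)) (B (p+1)) := hBA.symm
  have hC1 : C (p+1) = 1 := by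
    have : C (p+1) = ⁅(A (p+1))⁻¹, (B (p+1))⁻¹⁆ := by
      rw [commutatorElement_def, inv_inv, inv_inv, C]
    rw [this, commutatorElement_eq_one_iff_commute]
    exact hcomm.inv_inv
  have := orderC p
  rw [hC1, orderOf_one] at this
  have h2 : (1:ℕ) < 2^(p+1) := Nat.one_lt_two_pow (by omega)
  omega

lemma center_eq_commutator : Subgroup.center (P (p+1)) = commutator (P (p+1)) := by
  rw [center_eq, commutator_eq]

lemma isCyclic_commutator : IsCyclic (commutator (P (p+1))) := by
  rw [commutator_eq]
  exact ⟨⟨⟨C (p+1), Subgroup.mem_zpowers _⟩, fun x => by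
    obtain ⟨k, hk⟩ := Subgroup.mem_zpowers_iff.mp x.2
    refine Subgroup.mem_zpowers_iff.mpr ⟨k, ?_⟩
    ext
    rw [← hk]
    norm_cast⟩⟩

lemma card_commutator : Nat.card (commutator (P (p+1))) = 2^(p+1) := by
  rw [commutator_eq, Nat.card_zpowers, orderC]

end Phi
end RW


/-- **Basic properties of `R(n)`** for `n ≥ 1`:
(1) nilpotency class exactly 2; (2) exponent `2^(n+1)`; (3) the center coincides with
the derived subgroup and is cyclic of order `2^n`; (4) `R(n)` modulo its derived
subgroup is isomorphic to `C_{2^n} × C_{2^n}`. -/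
theorem stmt_5 (n : ℕ) (hn : 1 ≤ n) :
    (upperCentralSeries (Rgrp n) 2 = ⊤ ∧ upperCentralSeries (Rgrp n) 1 ≠ ⊤) ∧
    (Monoid.exponent (Rgrp n) = 2 ^ (n + 1)) ∧
    (Subgroup.center (Rgrp n) = commutator (Rgrp n) ∧
      IsCyclic (commutator (Rgrp n)) ∧ Nat.card (commutator (Rgrp n)) = 2 ^ n) ∧
    Nonempty ((Rgrp n ⧸ commutator (Rgrp n)) ≃*
      Multiplicative (ZMod (2 ^ n) × ZMod (2 ^ n))) := by
  obtain ⟨p, rfl⟩ : ∃ p, n = p + 1 := ⟨n - 1, by omega⟩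
  exact ⟨⟨RW.ucs2_top p, RW.ucs1_ne_top p⟩, RW.exponent_eq p,
    ⟨RW.center_eq_commutator p, RW.isCyclic_commutator p, RW.card_commutator p⟩,
    ⟨RW.iso4 p⟩⟩
end

section
/- Let p be a prime, F a field of characteristic p, and G a finite p-group of nilpotency class at most p − 1. Then for all x, y ∈ I(G) one has (x + y)^p − x^p − y^p ∈ I(G)^{p+1}, and for all x ∈ I(G) and z ∈ I(G)² one has (x + z)^p − x^p ∈ I(G)^{p+1}. Consequently, the p-power map induces a well-defined ring homomorphism I(G)/I(G)² → I(G)^p/I(G)^{p+1}. -/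
open scoped commutatorElement

/-! Auxiliary lemmas for `stmt_6`. -/

private lemma choose_zmod {p : ℕ} (hp : p.Prime) :
    ∀ k, k < p → (((p-1).choose k : ℕ) : ZMod p) = (-1)^k := by
  intro k
  induction k with
  | zero => simp
  | succ k ih =>
    intro hk
    have hp1 : p - 1 + 1 = p := Nat.succ_pred_eq_of_pos hp.pos
    have pas : (p-1).choose k + (p-1).choose (k+1) = p.choose (k+1) := by
      conv_rhs => rw [← hp1]
      rw [Nat.choose_succ_succ]
    have h0 : ((p.choose (k+1) : ℕ) : ZMod p) = 0 := by
      rw [ZMod.natCast_eq_zero_iff]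
      exact Nat.Prime.dvd_choose_self hp (Nat.succ_ne_zero k) hk
    have hc := congrArg (fun n : ℕ => (n : ZMod p)) pas
    push_cast at hc
    rw [ih (lt_trans (Nat.lt_succ_self k) hk), h0] at hc
    have : ((p - 1).choose (k + 1) : ZMod p) = -(-1)^k := by linear_combination hc
    rw [this, pow_succ]
    ring

private lemma ad_iter {S : Type*} [Ring S] {p : ℕ} (hp : p.Prime) (hS : (p : S) = 0)
    (a b : S) :
    (fun w => a*w - w*a)^[p-1] b = ∑ i ∈ Finset.range p, a^i * b * a^(p-1-i) := by
  have hL : (fun w => a*w - w*a) = ⇑(LinearMap.mulLeft ℤ a - LinearMap.mulRight ℤ a) := by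
    funext w; simp
  rw [hL, ← Module.End.pow_apply]
  have hcomm : Commute (LinearMap.mulLeft ℤ a) (-(LinearMap.mulRight ℤ a)) :=
    (LinearMap.commute_mulLeft_right a a).neg_right
  have hp1 : p - 1 + 1 = p := Nat.succ_pred_eq_of_pos hp.pos
  rw [sub_eq_add_neg, hcomm.add_pow, hp1]
  rw [LinearMap.sum_apply]
  apply Finset.sum_congr rfl
  intro k hk
  have hkp : k < p := Finset.mem_range.mp hk
  have e1 : ((LinearMap.mulLeft ℤ a)^k * (-(LinearMap.mulRight ℤ a))^(p-1-k) *
      ((p-1).choose k : Module.End ℤ S)) b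
      = ((-1:ℤ)^(p-1-k) * ((p-1).choose k : ℤ)) • (a^k * b * a^(p-1-k)) := by
    rw [Module.End.mul_apply, Module.End.mul_apply, Module.End.natCast_apply]
    rw [neg_pow, Module.End.mul_apply]
    have : ((-1 : Module.End ℤ S) ^ (p-1-k)) = (((-1:ℤ)^(p-1-k) : ℤ) : Module.End ℤ S) := by
      push_cast; ring
    rw [this, Module.End.intCast_apply, LinearMap.pow_mulRight, LinearMap.pow_mulLeft,
      LinearMap.mulRight_apply, LinearMap.mulLeft_apply]
    simp only [← natCast_zsmul, smul_mul_assoc, mul_smul_comm, smul_smul, mul_assoc]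
  rw [e1]
  set z : ℤ := (-1:ℤ)^(p-1-k) * ((p-1).choose k : ℤ) with hzdef
  have hz : ((z : ℤ) : ZMod p) = 1 := by
    have h1 : (((p-1).choose k : ℤ) : ZMod p) = (-1)^k := by
      push_cast
      exact_mod_cast choose_zmod hp k hkp
    have h2 : ((z : ℤ) : ZMod p) = (-1)^(p-1-k) * (-1)^k := by
      rw [hzdef]; push_cast [h1]; ring
    rw [h2, ← pow_add]
    have hke : p - 1 - k + k = p - 1 := Nat.sub_add_cancel (Nat.le_sub_one_of_lt hkp)
    rw [hke]
    rcases hp.eq_two_or_odd' with h2 | hodd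
    · subst h2; decide
    · exact (Nat.Odd.sub_odd hodd odd_one).neg_one_pow
  have hdvd : (p : ℤ) ∣ z - 1 := by
    rw [← ZMod.intCast_zmod_eq_zero_iff_dvd]
    push_cast [hz]
    ring
  obtain ⟨m, hm⟩ := hdvd
  have hzeq : z = 1 + p * m := by linarith
  rw [hzeq, add_smul, one_smul, mul_smul, zsmul_eq_mul, Int.cast_natCast, hS, zero_mul,
    add_zero]

private lemma deriv_pow_noncomm {S : Type*} [Semiring S] (v : Polynomial S) (n : ℕ) :
    Polynomial.derivative (v^n) =
      ∑ j ∈ Finset.range n, v^j * Polynomial.derivative v * v^(n-1-j) := by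
  induction n with
  | zero => simp
  | succ n ih =>
    rw [pow_succ, Polynomial.derivative_mul, ih, Finset.sum_mul, Finset.sum_range_succ]
    congr 1
    · apply Finset.sum_congr rfl
      intro j hj
      have hj' : j < n := Finset.mem_range.mp hj
      rw [mul_assoc (v^j * Polynomial.derivative v), ← pow_succ]
      congr 2
      omega
    · have h0 : n + 1 - 1 - n = 0 := by omega
      rw [h0, pow_zero, mul_one]

section GA
variable {F : Type*} [Field F] {G : Type*} [Group G]

private noncomputable def augHom (F G : Type*) [Field F] [Group G] : MonoidAlgebra F G →ₐ[F] F :=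
  (MonoidAlgebra.lift F F G) 1

variable {I : Ideal (MonoidAlgebra F G)}
  (hI : I = RingHom.ker ((MonoidAlgebra.lift F F G) 1))

private lemma aug_of (g : G) :
    augHom F G (MonoidAlgebra.of F G g) = 1 := by
  rw [augHom, MonoidAlgebra.lift_of]
  rfl

include hI

private lemma mem_I_iff {x : MonoidAlgebra F G} :
    x ∈ I ↔ augHom F G x = 0 := by
  rw [hI]; rfl

private lemma of_sub_one_mem (g : G) : MonoidAlgebra.of F G g - 1 ∈ I := by
  rw [mem_I_iff hI, map_sub, map_one, aug_of, sub_self]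

private lemma mem_span_of_mem_I {x : MonoidAlgebra F G} (hx : x ∈ I) :
    x ∈ Submodule.span F {z : MonoidAlgebra F G | ∃ g : G, z = MonoidAlgebra.of F G g - 1} := by
  have key : ∀ y : MonoidAlgebra F G, y - (augHom F G y) • 1 ∈
      Submodule.span F {z : MonoidAlgebra F G | ∃ g : G, z = MonoidAlgebra.of F G g - 1} := by
    intro y
    induction y using MonoidAlgebra.induction_on with
    | of g =>
      rw [aug_of, one_smul]
      exact Submodule.subset_span ⟨g, rfl⟩
    | add f g hf hg =>
      have h2 := Submodule.add_mem _ hf hg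
      have e : f + g - (augHom F G (f+g)) • 1
          = (f - (augHom F G f) • 1) + (g - (augHom F G g) • 1) := by
        rw [map_add, add_smul]; abel
      rw [e]; exact h2
    | smul r f hf =>
      have h2 := Submodule.smul_mem _ r hf
      have e : r • f - (augHom F G (r • f)) • 1
          = r • (f - (augHom F G f) • 1) := by
        rw [map_smul, smul_sub, smul_smul, smul_eq_mul]
      rw [e]; exact h2
  have h3 := key x
  rwa [(mem_I_iff hI).mp hx, zero_smul, sub_zero] at h3

private lemma mul_right_mem_pow :
    ∀ (n : ℕ) (z : MonoidAlgebra F G), z ∈ I^n → ∀ r, z * r ∈ I^n := by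
  intro n
  induction n with
  | zero =>
    intro z _ r
    rw [Submodule.pow_zero, Ideal.one_eq_top]
    trivial
  | succ n ih =>
    intro z hz r
    rw [Submodule.pow_succ] at hz ⊢
    refine Submodule.mul_induction_on (C := fun w => w * r ∈ I^n * I) hz ?_ ?_
    · intro m hm i hi
      rw [mul_assoc]
      refine Submodule.mul_mem_mul hm ?_
      rw [mem_I_iff hI, map_mul, (mem_I_iff hI).mp hi, zero_mul]
    · intro a b ha' hb'
      rw [add_mul]; exact add_mem ha' hb'

private lemma mul_mem_pow_add {s : ℕ} {a : MonoidAlgebra F G} (ha : a ∈ I^s) :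
    ∀ (t : ℕ) (b : MonoidAlgebra F G), b ∈ I^t → a * b ∈ I^(s+t) := by
  intro t
  induction t with
  | zero => intro b _; exact mul_right_mem_pow hI s a ha b
  | succ t ih =>
    intro b hb
    rw [Submodule.pow_succ] at hb
    have hst : s + (t + 1) = (s + t) + 1 := by omega
    rw [hst, Submodule.pow_succ]
    refine Submodule.mul_induction_on (C := fun w => a * w ∈ I^(s+t) * I) hb ?_ ?_
    · intro m hm i hi
      rw [← mul_assoc]
      exact Submodule.mul_mem_mul (ih m hm) hi
    · intro u v hu' hv'
      rw [mul_add]; exact add_mem hu' hv'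

private lemma pow_le_pow_ga {m n : ℕ} (h : m ≤ n) : I^n ≤ I^m := by
  obtain ⟨k, rfl⟩ := Nat.exists_eq_add_of_le h
  induction k with
  | zero => simp
  | succ k ih =>
    intro z hz
    have hmk : m + (k+1) = (m + k) + 1 := by omega
    rw [hmk, Submodule.pow_succ] at hz
    refine Submodule.mul_induction_on (C := fun w => w ∈ I^m) hz ?_ ?_
    · intro a ha b hb
      exact mul_right_mem_pow hI m a (ih (by omega) ha) b
    · intro u v hu' hv'
      exact add_mem hu' hv'

private lemma lcs_dim : ∀ (k : ℕ) (c : G), c ∈ Subgroup.lowerCentralSeries (⊤ : Subgroup G) k →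
    MonoidAlgebra.of F G c - 1 ∈ I^(k+1) := by
  intro k
  induction k with
  | zero =>
    intro c _
    rw [Submodule.pow_one]
    exact of_sub_one_mem hI c
  | succ k ih =>
    have hcomm : ∀ x ∈ Subgroup.lowerCentralSeries (⊤ : Subgroup G) k, ∀ y : G,
        MonoidAlgebra.of F G ⁅x, y⁆ - 1 ∈ I^(k+2) := by
      intro x hx y
      have key : MonoidAlgebra.of F G ⁅x, y⁆ - 1 =
          ((MonoidAlgebra.of F G x - 1) * (MonoidAlgebra.of F G y - 1)
            - (MonoidAlgebra.of F G y - 1) * (MonoidAlgebra.of F G x - 1))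
            * MonoidAlgebra.of F G (y * x)⁻¹ := by
        have h1 : (⁅x, y⁆ : G) = (x * y) * (y * x)⁻¹ := by group
        have h2 : (MonoidAlgebra.of F G (y * x)) * (MonoidAlgebra.of F G (y * x)⁻¹) = 1 := by
          rw [← map_mul, mul_inv_cancel, map_one]
        calc MonoidAlgebra.of F G ⁅x, y⁆ - 1
            = (MonoidAlgebra.of F G (x*y) - MonoidAlgebra.of F G (y*x))
              * MonoidAlgebra.of F G (y * x)⁻¹ := by
              rw [h1, map_mul, sub_mul, h2]
          _ = _ := by
              rw [map_mul, map_mul]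
              noncomm_ring
      rw [key]
      apply mul_right_mem_pow hI
      have hx1 : MonoidAlgebra.of F G x - 1 ∈ I^(k+1) := ih x hx
      have hy1 : MonoidAlgebra.of F G y - 1 ∈ I^1 := by
        rw [Submodule.pow_one]; exact of_sub_one_mem hI y
      have t1 : (MonoidAlgebra.of F G x - 1) * (MonoidAlgebra.of F G y - 1) ∈ I^(k+2) :=
        mul_mem_pow_add hI hx1 1 _ hy1
      have t2 : (MonoidAlgebra.of F G y - 1) * (MonoidAlgebra.of F G x - 1) ∈ I^(k+2) := by
        have := mul_mem_pow_add hI hy1 (k+1) _ hx1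
        rwa [show 1 + (k+1) = k+2 by omega] at this
      exact sub_mem t1 t2
    intro c hc
    let D : Subgroup G := {
      carrier := {g : G | MonoidAlgebra.of F G g - 1 ∈ I^(k+2)}
      one_mem' := by
        rw [Set.mem_setOf_eq, map_one, sub_self]
        exact zero_mem _
      mul_mem' := by
        intro a b ha hb
        have key : MonoidAlgebra.of F G (a*b) - 1 =
            (MonoidAlgebra.of F G a - 1) * (MonoidAlgebra.of F G b - 1)
            + (MonoidAlgebra.of F G a - 1) + (MonoidAlgebra.of F G b - 1) := by
          rw [map_mul]; noncomm_ring
        rw [Set.mem_setOf_eq, key]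
        refine add_mem (add_mem ?_ ha) hb
        exact mul_right_mem_pow hI _ _ ha _
      inv_mem' := by
        intro a ha
        have key : MonoidAlgebra.of F G a⁻¹ - 1 =
            - (MonoidAlgebra.of F G a⁻¹ * (MonoidAlgebra.of F G a - 1)) := by
          rw [mul_sub, ← map_mul, inv_mul_cancel, map_one]
          noncomm_ring
        rw [Set.mem_setOf_eq, key]
        exact neg_mem (Ideal.mul_mem_left _ _ ha) }
    have hle : Subgroup.lowerCentralSeries (⊤ : Subgroup G) (k+1) ≤ D := by
      have h4 : Subgroup.lowerCentralSeries (⊤ : Subgroup G) (k+1) = ⁅Subgroup.lowerCentralSeries (⊤ : Subgroup G) k, (⊤ : Subgroup G)⁆ := rfl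
      rw [h4, Subgroup.commutator_le]
      intro g1 hg1 g2 _
      exact hcomm g1 hg1 g2
    exact hle hc

omit hI

private noncomputable def Cfil (I : Ideal (MonoidAlgebra F G)) (k : ℕ) :
    Submodule F (MonoidAlgebra F G) :=
  Submodule.span F {z : MonoidAlgebra F G | ∃ g : G, ∃ c ∈ Subgroup.lowerCentralSeries (⊤ : Subgroup G) k,
      z = MonoidAlgebra.of F G g * (MonoidAlgebra.of F G c - 1)}
  ⊔ Submodule.restrictScalars F (I^(k+2))

include hI

private lemma mem_Cfil_zero {x : MonoidAlgebra F G} (hx : x ∈ I) : x ∈ Cfil I 0 := by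
  refine Submodule.mem_sup_left (Submodule.span_mono ?_ (mem_span_of_mem_I hI hx))
  rintro z ⟨g, rfl⟩
  exact ⟨1, g, Subgroup.mem_top g, by rw [map_one, one_mul]⟩

private lemma cfil_bracket : ∀ (k : ℕ) (w : MonoidAlgebra F G), w ∈ Cfil I k →
    ∀ z ∈ I, z * w - w * z ∈ Cfil I (k+1) := by
  intro k w hw z hz
  suffices main : ∀ h : G,
      (MonoidAlgebra.of F G h - 1) * w - w * (MonoidAlgebra.of F G h - 1) ∈ Cfil I (k+1) by
    have hzs := mem_span_of_mem_I hI hz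
    refine Submodule.span_induction ?_ ?_ ?_ ?_ hzs
    · rintro _ ⟨h, rfl⟩; exact main h
    · simp
    · intro a b _ _ pa pb
      have e : (a + b) * w - w * (a + b) = (a * w - w * a) + (b * w - w * b) := by noncomm_ring
      rw [e]; exact add_mem pa pb
    · intro r a _ pa
      have e : (r • a) * w - w * (r • a) = r • (a * w - w * a) := by
        rw [smul_mul_assoc, mul_smul_comm, smul_sub]
      rw [e]; exact Submodule.smul_mem _ r pa
  intro h
  rw [Cfil, Submodule.mem_sup] at hw
  obtain ⟨w1, hw1, w2, hw2, rfl⟩ := hw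
  have e : (MonoidAlgebra.of F G h - 1) * (w1 + w2) - (w1 + w2) * (MonoidAlgebra.of F G h - 1)
      = ((MonoidAlgebra.of F G h - 1) * w1 - w1 * (MonoidAlgebra.of F G h - 1))
        + ((MonoidAlgebra.of F G h - 1) * w2 - w2 * (MonoidAlgebra.of F G h - 1)) := by
    noncomm_ring
  rw [e]
  refine add_mem ?_ ?_
  · clear e hz z
    refine Submodule.span_induction ?_ ?_ ?_ ?_ hw1
    · rintro _ ⟨g, c, hc, rfl⟩
      have key : (MonoidAlgebra.of F G h - 1) *
            (MonoidAlgebra.of F G g * (MonoidAlgebra.of F G c - 1))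
          - (MonoidAlgebra.of F G g * (MonoidAlgebra.of F G c - 1)) * (MonoidAlgebra.of F G h - 1)
          = MonoidAlgebra.of F G (h*g*(h⁻¹*c*h)) * (MonoidAlgebra.of F G (h⁻¹*c⁻¹*h*c) - 1)
            + MonoidAlgebra.of F G (g*h) *
              ((MonoidAlgebra.of F G (h⁻¹*g⁻¹*h*g) - 1) * (MonoidAlgebra.of F G (h⁻¹*c*h) - 1)) := by
        simp only [mul_sub, sub_mul, mul_one, one_mul, ← map_mul, mul_assoc,
          inv_mul_cancel_left, mul_inv_cancel_left, inv_mul_cancel, mul_inv_cancel]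
        abel
      rw [key]
      refine add_mem (Submodule.mem_sup_left ?_) (Submodule.mem_sup_right ?_)
      · refine Submodule.subset_span ⟨h*g*(h⁻¹*c*h), h⁻¹*c⁻¹*h*c, ?_, rfl⟩
        have hmem : (⁅c⁻¹, h⁻¹⁆ : G) ∈ Subgroup.lowerCentralSeries (⊤ : Subgroup G) (k+1) := by
          have h5 : Subgroup.lowerCentralSeries (⊤ : Subgroup G) (k+1) = ⁅Subgroup.lowerCentralSeries (⊤ : Subgroup G) k, (⊤ : Subgroup G)⁆ := rfl
          rw [h5]
          exact Subgroup.commutator_mem_commutator (inv_mem hc) (Subgroup.mem_top _)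
        have hinv := inv_mem hmem
        have h6 : (⁅c⁻¹, h⁻¹⁆ : G)⁻¹ = h⁻¹*c⁻¹*h*c := by
          rw [commutatorElement_def]; group
        rwa [h6] at hinv
      · show _ ∈ I^((k+1)+2)
        have he : (h⁻¹*g⁻¹*h*g : G) ∈ Subgroup.lowerCentralSeries (⊤ : Subgroup G) 1 := by
          have h7 : Subgroup.lowerCentralSeries (⊤ : Subgroup G) 1 = ⁅(⊤ : Subgroup G), (⊤ : Subgroup G)⁆ := by
            have : Subgroup.lowerCentralSeries (⊤ : Subgroup G) 1 = ⁅Subgroup.lowerCentralSeries (⊤ : Subgroup G) 0, (⊤ : Subgroup G)⁆ := rfl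
            rw [this, lowerCentralSeries_zero]
          rw [h7]
          have h8 : (h⁻¹*g⁻¹*h*g : G) = ⁅h⁻¹, g⁻¹⁆ := by
            rw [commutatorElement_def]; group
          rw [h8]
          exact Subgroup.commutator_mem_commutator (Subgroup.mem_top _) (Subgroup.mem_top _)
        have hc' : (h⁻¹*c*h : G) ∈ Subgroup.lowerCentralSeries (⊤ : Subgroup G) k := by
          have h9 := (Subgroup.lowerCentralSeries_normal (⊤ : Subgroup G) k).conj_mem c hc h⁻¹
          rwa [inv_inv] at h9
        have t1 : (MonoidAlgebra.of F G (h⁻¹*g⁻¹*h*g) - 1) * (MonoidAlgebra.of F G (h⁻¹*c*h) - 1)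
            ∈ I^((1+1)+(k+1)) := mul_mem_pow_add hI (lcs_dim hI 1 _ he) (k+1) _ (lcs_dim hI k _ hc')
        rw [show (1+1)+(k+1) = (k+1)+2 by omega] at t1
        exact Ideal.mul_mem_left _ _ t1
    · simp
    · intro a b _ _ pa pb
      have e : (MonoidAlgebra.of F G h - 1) * (a + b) - (a + b) * (MonoidAlgebra.of F G h - 1)
          = ((MonoidAlgebra.of F G h - 1) * a - a * (MonoidAlgebra.of F G h - 1))
            + ((MonoidAlgebra.of F G h - 1) * b - b * (MonoidAlgebra.of F G h - 1)) := by
        noncomm_ring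
      rw [e]; exact add_mem pa pb
    · intro r a _ pa
      have e : (MonoidAlgebra.of F G h - 1) * (r • a) - (r • a) * (MonoidAlgebra.of F G h - 1)
          = r • ((MonoidAlgebra.of F G h - 1) * a - a * (MonoidAlgebra.of F G h - 1)) := by
        rw [smul_mul_assoc, mul_smul_comm, smul_sub]
      rw [e]; exact Submodule.smul_mem _ r pa
  · refine Submodule.mem_sup_right ?_
    show _ ∈ I^((k+1)+2)
    have h1 : MonoidAlgebra.of F G h - 1 ∈ I^1 := by
      rw [Submodule.pow_one]; exact of_sub_one_mem hI h
    have t1 : (MonoidAlgebra.of F G h - 1) * w2 ∈ I^(1+(k+2)) :=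
      mul_mem_pow_add hI h1 (k+2) _ hw2
    have t2 : w2 * (MonoidAlgebra.of F G h - 1) ∈ I^((k+2)+1) :=
      mul_mem_pow_add hI hw2 1 _ h1
    rw [show 1+(k+2) = (k+1)+2 by omega] at t1
    rw [show (k+2)+1 = (k+1)+2 by omega] at t2
    exact sub_mem t1 t2

end GA

/-- **The `p`-power map on `I(G)/I(G)²`.** Let `F` be a field of characteristic `p` and
`G` a finite `p`-group of nilpotency class at most `p - 1`, and let `I` be the
augmentation ideal of `FG`. Then `(x+y)^p - x^p - y^p ∈ I^(p+1)` for `x, y ∈ I`,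
`(x+z)^p - x^p ∈ I^(p+1)` for `x ∈ I`, `z ∈ I²`, and `(xy)^p - x^p y^p ∈ I^(p+1)` for
`x, y ∈ I`; i.e. the `p`-power map induces a well-defined ring homomorphism
`I/I² → I^p/I^(p+1)`. -/
theorem stmt_6 {p : ℕ} (hp : p.Prime) (F : Type*) [Field F] [CharP F p]
    (G : Type*) [Group G] [Finite G] (hpG : IsPGroup p G)
    (hclass : upperCentralSeries G (p - 1) = ⊤)
    (I : Ideal (MonoidAlgebra F G))
    (hI : I = RingHom.ker ((MonoidAlgebra.lift F F G) 1)) :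
    (∀ x y : MonoidAlgebra F G, x ∈ I → y ∈ I →
        (x + y) ^ p - x ^ p - y ^ p ∈ I ^ (p + 1)) ∧
    (∀ x z : MonoidAlgebra F G, x ∈ I → z ∈ I ^ 2 →
        (x + z) ^ p - x ^ p ∈ I ^ (p + 1)) ∧
    (∀ x y : MonoidAlgebra F G, x ∈ I → y ∈ I →
        (x * y) ^ p - x ^ p * y ^ p ∈ I ^ (p + 1)) := by
  have hp2 : 2 ≤ p := hp.two_le
  haveI hnil : Group.IsNilpotent G := ⟨⟨p-1, hclass⟩⟩
  have hlcs : Subgroup.lowerCentralSeries (⊤ : Subgroup G) (p-1) = ⊥ := by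
    rw [lowerCentralSeries_eq_bot_iff_nilpotencyClass_le]
    exact upperCentralSeries_eq_top_iff_nilpotencyClass_le.mp hclass
  -- membership of powers
  have hpow_mem : ∀ {s : ℕ} {z : MonoidAlgebra F G}, z ∈ I^s → ∀ n, z^n ∈ I^(s*n) := by
    intro s z hz n
    induction n with
    | zero => rw [pow_zero, Nat.mul_zero, Submodule.pow_zero, Ideal.one_eq_top]; trivial
    | succ n ih =>
      rw [pow_succ, show s*(n+1) = s*n + s by ring]
      exact mul_mem_pow_add hI ih s z hz
  -- char p
  have hchR : ((p : ℕ) : MonoidAlgebra F G) = 0 := by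
    have h1 : ((p:ℕ) : F) = 0 := CharP.cast_eq_zero F p
    rw [← map_natCast (algebraMap F (MonoidAlgebra F G)) p, h1, map_zero]
  have hchS : ((p : ℕ) : Polynomial (MonoidAlgebra F G)) = 0 := by
    rw [← Polynomial.C_eq_natCast, hchR, map_zero]
  -- main additive statement
  have main : ∀ x y : MonoidAlgebra F G, x ∈ I → y ∈ I →
      (x + y) ^ p - x ^ p - y ^ p ∈ I ^ (p + 1) := by
    intro x y hx hy
    set u : Polynomial (MonoidAlgebra F G) := Polynomial.C x + Polynomial.X * Polynomial.C y
      with hu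
    -- iterated brackets have deep coefficients
    have hcoeffstep : ∀ (m : ℕ) (f : Polynomial (MonoidAlgebra F G)),
        (∀ n, f.coeff n ∈ Cfil I m) → ∀ n, (u * f - f * u).coeff n ∈ Cfil I (m+1) := by
      intro m f hf n
      have hid : u * f - f * u = (Polynomial.C x * f - f * Polynomial.C x)
          + Polynomial.X * (Polynomial.C y * f - f * Polynomial.C y) := by
        have hXf : f * (Polynomial.X * Polynomial.C y)
            = Polynomial.X * (f * Polynomial.C y) := by
          rw [← mul_assoc, ← Polynomial.X_mul, mul_assoc]
        rw [hu]
        rw [add_mul, mul_add, hXf, mul_sub]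
        noncomm_ring
      rw [hid]
      rcases n with _ | n
      · rw [Polynomial.coeff_add, Polynomial.mul_coeff_zero, Polynomial.coeff_X_zero, zero_mul,
          add_zero, Polynomial.coeff_sub, Polynomial.coeff_C_mul, Polynomial.coeff_mul_C]
        exact cfil_bracket hI m _ (hf 0) x hx
      · rw [Polynomial.coeff_add, Polynomial.coeff_X_mul, Polynomial.coeff_sub,
          Polynomial.coeff_sub, Polynomial.coeff_C_mul, Polynomial.coeff_mul_C,
          Polynomial.coeff_C_mul, Polynomial.coeff_mul_C]
        exact add_mem (cfil_bracket hI m _ (hf (n+1)) x hx)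
          (cfil_bracket hI m _ (hf n) y hy)
    have hiter : ∀ (m : ℕ) (n : ℕ),
        ((fun w => u * w - w * u)^[m] (Polynomial.C y)).coeff n ∈ Cfil I m := by
      intro m
      induction m with
      | zero =>
        intro n
        rw [Function.iterate_zero_apply, Polynomial.coeff_C]
        split
        · exact mem_Cfil_zero hI hy
        · exact zero_mem _
      | succ m ih =>
        intro n
        rw [Function.iterate_succ_apply']
        exact hcoeffstep m _ ih n
    have hCle : Cfil I (p-1) ≤ Submodule.restrictScalars F (I^(p+1)) := by
      rw [Cfil]
      apply sup_le
      · rw [Submodule.span_le]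
        rintro z ⟨g, c, hc, rfl⟩
        rw [hlcs, Subgroup.mem_bot] at hc
        subst hc
        rw [map_one, sub_self, mul_zero]
        exact zero_mem _
      · rw [show (p-1)+2 = p+1 by omega]
    -- derivative identity
    have hderiv : Polynomial.derivative (u^p)
        = (fun w => u*w - w*u)^[p-1] (Polynomial.C y) := by
      have hdu : Polynomial.derivative u = Polynomial.C y := by
        rw [hu, Polynomial.derivative_add, Polynomial.derivative_C,
          Polynomial.derivative_mul, Polynomial.derivative_X, Polynomial.derivative_C,
          one_mul, mul_zero, add_zero, zero_add]
      rw [deriv_pow_noncomm, hdu, ad_iter hp hchS u (Polynomial.C y)]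
    have hcder : ∀ n, (Polynomial.derivative (u^p)).coeff n ∈ I^(p+1) := by
      intro n
      rw [hderiv]
      exact hCle (hiter (p-1) n)
    -- degree bound
    have hu1 : u.natDegree ≤ 1 := by
      refine (Polynomial.natDegree_add_le _ _).trans ?_
      have h1 : (Polynomial.X * Polynomial.C y).natDegree ≤ 1 := by
        refine Polynomial.natDegree_mul_le.trans ?_
        rw [Polynomial.natDegree_X, Polynomial.natDegree_C]
      exact max_le (by simp [Polynomial.natDegree_C]) h1
    have hdeg : (u^p).natDegree ≤ p :=
      Polynomial.natDegree_pow_le.trans (by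
        calc p * u.natDegree ≤ p * 1 := Nat.mul_le_mul_left p hu1
        _ = p := Nat.mul_one p)
    -- middle coefficients
    have hmid : ∀ n : ℕ, n + 1 ≤ p - 1 → (u^p).coeff (n+1) ∈ I^(p+1) := by
      intro n hn
      have hd := hcder n
      rw [Polynomial.coeff_derivative] at hd
      set a : F := ((n+1 : ℕ) : F) with hadef
      have ha : a ≠ 0 := by
        rw [hadef, Ne, CharP.cast_eq_zero_iff F p]
        exact Nat.not_dvd_of_pos_of_lt (by omega) (by omega)
      have hcastR : ((n : MonoidAlgebra F G) + 1) = algebraMap F (MonoidAlgebra F G) a := by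
        rw [hadef, map_natCast]
        push_cast
        ring
      rw [hcastR, ← Algebra.commutes, ← Algebra.smul_def] at hd
      have h2 := Submodule.smul_mem (Submodule.restrictScalars F (I^(p+1))) a⁻¹ hd
      rw [smul_smul, inv_mul_cancel₀ ha, one_smul] at h2
      exact h2
    -- constant coefficient
    have hc0 : (u^p).coeff 0 = x^p := by
      have hcu : Polynomial.constantCoeff u = x := by
        show u.coeff 0 = x
        rw [hu, Polynomial.coeff_add, Polynomial.mul_coeff_zero, Polynomial.coeff_X_zero,
          zero_mul, add_zero, Polynomial.coeff_C_zero]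
      have := map_pow Polynomial.constantCoeff u p
      rw [hcu] at this
      exact this
    -- top coefficient
    have hctop : ∀ n : ℕ, (u^n).coeff n = y^n := by
      intro n
      induction n with
      | zero => simp
      | succ n ih =>
        have hdn : (u^n).natDegree ≤ n :=
          Polynomial.natDegree_pow_le.trans (by
            calc n * u.natDegree ≤ n * 1 := Nat.mul_le_mul_left n hu1
            _ = n := Nat.mul_one n)
        have hcu1 : u.coeff 1 = y := by
          rw [hu, Polynomial.coeff_add]
          rw [Polynomial.coeff_C]
          have h1 : (Polynomial.X * Polynomial.C y).coeff 1 = y := by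
            have := Polynomial.coeff_X_mul (Polynomial.C y) 0
            rw [this, Polynomial.coeff_C_zero]
          rw [h1]
          simp
        rw [pow_succ, Polynomial.coeff_mul_add_eq_of_natDegree_le hdn hu1, ih, hcu1, pow_succ]
    -- sum of coefficients
    let φ : Polynomial (MonoidAlgebra F G) →+* MonoidAlgebra F G :=
      Polynomial.eval₂RingHom' (RingHom.id (MonoidAlgebra F G)) 1 (fun a => Commute.one_right a)
    have hφu : φ u = x + y := by
      show Polynomial.eval₂ (RingHom.id (MonoidAlgebra F G)) 1 u = x + y
      rw [hu, Polynomial.X_mul, Polynomial.eval₂_add, Polynomial.eval₂_C,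
        Polynomial.eval₂_mul_X, Polynomial.eval₂_C]
      simp
    have hφpow : φ (u^p) = (x + y)^p := by
      rw [map_pow, hφu]
    have hsum : φ (u^p) = ∑ i ∈ Finset.range (p+1), (u^p).coeff i := by
      show Polynomial.eval₂ (RingHom.id (MonoidAlgebra F G)) 1 (u^p) = _
      rw [Polynomial.eval₂_eq_sum_range' (RingHom.id (MonoidAlgebra F G))
        (lt_of_le_of_lt hdeg (Nat.lt_succ_self p)) 1]
      apply Finset.sum_congr rfl
      intro i _
      rw [one_pow, mul_one, RingHom.id_apply]
    have hfinal : (x+y)^p - x^p - y^p = ∑ i ∈ Finset.range (p-1), (u^p).coeff (i+1) := by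
      have e1 : ∑ i ∈ Finset.range (p+1), (u^p).coeff i
          = (∑ i ∈ Finset.range p, (u^p).coeff i) + (u^p).coeff p :=
        Finset.sum_range_succ _ p
      have e2 : ∑ i ∈ Finset.range p, (u^p).coeff i
          = (∑ i ∈ Finset.range (p-1), (u^p).coeff (i+1)) + (u^p).coeff 0 := by
        have h3 := Finset.sum_range_succ' (fun i => (u^p).coeff i) (p-1)
        rw [show p-1+1 = p by omega] at h3
        exact h3
      rw [← hφpow, hsum, e1, e2, hc0, hctop p]
      abel
    rw [hfinal]
    exact Submodule.sum_mem _ (fun i hi => by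
      have := Finset.mem_range.mp hi
      exact hmid i (by omega))
  refine ⟨main, ?_, ?_⟩
  · intro x z hx hz2
    have hz : z ∈ I := by
      have h1 := pow_le_pow_ga hI (show 1 ≤ 2 by omega) hz2
      rwa [Submodule.pow_one] at h1
    have hzp : z^p ∈ I^(p+1) := by
      have h2 := hpow_mem hz2 p
      exact pow_le_pow_ga hI (by omega) h2
    have h3 := main x z hx hz
    have h4 := add_mem h3 hzp
    have e : ((x + z)^p - x^p - z^p) + z^p = (x+z)^p - x^p := by abel
    rwa [e] at h4
  · intro x y hx hy
    have hx1 : x ∈ I^1 := by rwa [Submodule.pow_one]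
    have hy1 : y ∈ I^1 := by rwa [Submodule.pow_one]
    have hxy : x * y ∈ I^2 := by
      have := mul_mem_pow_add hI hx1 1 _ hy1
      rwa [show 1+1 = 2 by omega] at this
    have h1 : (x*y)^p ∈ I^(p+1) := pow_le_pow_ga hI (by omega) (hpow_mem hxy p)
    have hxp : x^p ∈ I^p := by
      have := hpow_mem hx1 p
      rwa [Nat.one_mul] at this
    have hyp : y^p ∈ I^p := by
      have := hpow_mem hy1 p
      rwa [Nat.one_mul] at this
    have h2 : x^p * y^p ∈ I^(p+1) := by
      have := mul_mem_pow_add hI hxp p _ hyp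
      exact pow_le_pow_ga hI (by omega) this
    exact sub_mem h1 h2
end

section
/- Let F be a field of characteristic 2, n ≥ 1, and let B and B' be non-singular quadratic forms on a 2n-dimensional F-vector space V which are similar, i.e. there exist s ∈ F, s ≠ 0, and a bijective F-linear map A : V → V with B(v) = s·B'(A v) for all v ∈ V. Then for every symplectic basis a₁,…,a_n,b₁,…,b_n of V with respect to the polar form of B and every symplectic basis a'₁,…,a'_n,b'₁,…,b'_n of V with respect to the polar form of B', there exists x ∈ F such that Σ_{i=1}^n B(a_i)·B(b_i) = Σ_{i=1}^n B'(a'_i)·B'(b'_i) + x² + x. -/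
open QuadraticMap Sum Finset
set_option linter.unusedSectionVars false

section ArfAux

variable {F : Type*} [Field F] [CharP F 2] {V : Type*} [AddCommGroup V] [Module F V]

private lemma two0 : (2:F) = 0 := by
  simpa using (CharP.cast_eq_zero F 2)

include F in
private lemma vadd_self (x : V) : x + x = 0 := by
  have h : (2:F) • x = x + x := two_smul F x
  rw [← h, two0, zero_smul]

variable (B : QuadraticForm F V)

private lemma polar_vv (v : V) : polar B v v = 0 := by
  rw [polar_self]
  rw [two_smul]
  exact CharTwo.add_self_eq_zero _

private lemma B_add (x w : V) : B (x + w) = B x + B w + polar B x w := by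
  simp only [polar]; ring

private lemma polar_sum_right' {ι : Type*} (x : V) (s : Finset ι) (f : ι → V) :
    polar B x (∑ j ∈ s, f j) = ∑ j ∈ s, polar B x (f j) := by
  simpa only [polarBilin_apply_apply] using map_sum ((polarBilin B) x) f s

/-- The transvection-like map associated to `v` and `c`. -/
def Tv (v : V) (c : F) (x : V) : V := x + (c * polar B x v) • v

lemma Tv_polar (v : V) (c : F) (x y : V) :
    polar B (Tv B v c x) (Tv B v c y) = polar B x y := by
  simp only [Tv, polar_add_left, polar_add_right, polar_smul_left, polar_smul_right,
    smul_eq_mul, polar_vv, mul_zero]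
  rw [polar_comm (⇑B) v y]
  linear_combination (c * polar (⇑B) x v * polar (⇑B) y v) * (two0 (F := F))

lemma Tv_apply_B (v : V) (c : F) (x : V) :
    B (Tv B v c x) = B x + c^2 * (polar B x v)^2 * B v + c * (polar B x v)^2 := by
  rw [Tv, B_add, QuadraticMap.map_smul, polar_smul_right]
  simp only [smul_eq_mul]
  ring

lemma Tv_fix (v : V) (c : F) (x : V) (h : polar B x v = 0) : Tv B v c x = x := by
  simp [Tv, h]

lemma Tv_invol (v : V) (c : F) (x : V) : Tv B v c (Tv B v c x) = x := by
  have h : polar B (Tv B v c x) v = polar B x v := by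
    rw [Tv, polar_add_left, polar_smul_left, polar_vv B v]
    simp
  rw [Tv, h]
  show x + (c * polar (⇑B) x v) • v + (c * polar (⇑B) x v) • v = x
  rw [add_assoc, vadd_self (F := F), add_zero]

lemma Tv_sends (g h : V) (hd : polar B g h ≠ 0) :
    Tv B (g + h) (polar B g h)⁻¹ g = h := by
  have : polar B g (g + h) = polar B g h := by
    rw [polar_add_right, polar_vv, zero_add]
  rw [Tv, this, inv_mul_cancel₀ hd, one_smul, ← add_assoc, vadd_self (F := F), zero_add]

/-- `Tv` as a linear equivalence. -/
def TvEquiv (v : V) (c : F) : V ≃ₗ[F] V where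
  toFun := Tv B v c
  invFun := Tv B v c
  map_add' x y := by
    simp only [Tv, polar_add_left, mul_add, add_smul]
    abel
  map_smul' a x := by
    simp only [Tv, polar_smul_left, smul_eq_mul, smul_add, smul_smul, RingHom.id_apply]
    congr 1
    ring
  left_inv x := Tv_invol B v c x
  right_inv x := Tv_invol B v c x


section Arf2

variable {F : Type*} [Field F] [CharP F 2] {V : Type*} [AddCommGroup V] [Module F V]
variable (B : QuadraticForm F V) (n : ℕ)

/-- A family indexed by `Fin n ⊕ Fin n` satisfying the symplectic-basis polar relations. -/
def SympFam (e : Fin n ⊕ Fin n → V) : Prop :=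
  (∀ i, polar B (e (inl i)) (e (inr i)) = 1) ∧
  (∀ i j, polar B (e (inl i)) (e (inl j)) = 0) ∧
  (∀ i j, polar B (e (inr i)) (e (inr j)) = 0) ∧
  (∀ i j, i ≠ j → polar B (e (inl i)) (e (inr j)) = 0)

/-- The Arf sum of a family. -/
def Arf (e : Fin n ⊕ Fin n → V) : F := ∑ i : Fin n, B (e (inl i)) * B (e (inr i))

lemma Arf_congr {e f : Fin n ⊕ Fin n → V} (h : ∀ j, e j = f j) : Arf B n e = Arf B n f := by
  unfold Arf
  exact Finset.sum_congr rfl fun i _ => by rw [h (inl i), h (inr i)]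

variable {B n}

lemma coord_inl (e : Module.Basis (Fin n ⊕ Fin n) F V) (he : SympFam B n ⇑e) (i : Fin n) (v : V) :
    polar B (e (inl i)) v = e.repr v (inr i) := by
  have h1 : ∑ j : Fin n, e.repr v (inl j) * polar B (e (inl i)) (e (inl j)) = 0 :=
    Finset.sum_eq_zero fun j _ => by rw [he.2.1 i j, mul_zero]
  have h2 : ∑ j : Fin n, e.repr v (inr j) * polar B (e (inl i)) (e (inr j))
      = e.repr v (inr i) := by
    rw [Finset.sum_eq_single i (fun j _ hj => by rw [he.2.2.2 i j (Ne.symm hj), mul_zero])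
      (fun h => absurd (Finset.mem_univ i) h), he.1 i, mul_one]
  conv_lhs => rw [← e.sum_repr v]
  rw [polar_sum_right', Fintype.sum_sum_type]
  simp only [polar_smul_right, smul_eq_mul]
  rw [h1, h2, zero_add]

lemma coord_inr (e : Module.Basis (Fin n ⊕ Fin n) F V) (he : SympFam B n ⇑e) (i : Fin n) (v : V) :
    polar B (e (inr i)) v = e.repr v (inl i) := by
  have h1 : ∑ j : Fin n, e.repr v (inl j) * polar B (e (inr i)) (e (inl j))
      = e.repr v (inl i) := by
    rw [Finset.sum_eq_single i
      (fun j _ hj => by rw [polar_comm, he.2.2.2 j i hj, mul_zero])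
      (fun h => absurd (Finset.mem_univ i) h), polar_comm, he.1 i, mul_one]
  have h2 : ∑ j : Fin n, e.repr v (inr j) * polar B (e (inr i)) (e (inr j)) = 0 :=
    Finset.sum_eq_zero fun j _ => by rw [he.2.2.1 i j, mul_zero]
  conv_lhs => rw [← e.sum_repr v]
  rw [polar_sum_right', Fintype.sum_sum_type]
  simp only [polar_smul_right, smul_eq_mul]
  rw [h1, h2, add_zero]

private lemma B_sum_orth {ι : Type*} [DecidableEq ι] (s : Finset ι) (f : ι → V)
    (h : ∀ i ∈ s, ∀ j ∈ s, i ≠ j → polar B (f i) (f j) = 0) :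
    B (∑ i ∈ s, f i) = ∑ i ∈ s, B (f i) := by
  classical
  induction s using Finset.induction with
  | empty => simp
  | @insert a s ha ih =>
    rw [Finset.sum_insert ha, Finset.sum_insert ha, B_add, polar_sum_right',
      Finset.sum_eq_zero (fun j hj => h a (Finset.mem_insert_self a s) j
        (Finset.mem_insert_of_mem hj) (fun hh => ha (hh ▸ hj))), add_zero,
      ih (fun i hi j hj hij => h i (Finset.mem_insert_of_mem hi) j
        (Finset.mem_insert_of_mem hj) hij)]

/-- Expansion of `B v` in a symplectic basis. -/
lemma B_expand (e : Module.Basis (Fin n ⊕ Fin n) F V) (he : SympFam B n ⇑e) (v : V) :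
    B v = ∑ i : Fin n, ((polar B (e (inr i)) v)^2 * B (e (inl i))
      + (polar B (e (inl i)) v)^2 * B (e (inr i))
      + polar B (e (inl i)) v * polar B (e (inr i)) v) := by
  have hv : v = ∑ i : Fin n,
      (e.repr v (inl i) • e (inl i) + e.repr v (inr i) • e (inr i)) := by
    conv_lhs => rw [← e.sum_repr v]
    rw [Fintype.sum_sum_type, ← Finset.sum_add_distrib]
  have horth : ∀ i ∈ (Finset.univ : Finset (Fin n)), ∀ j ∈ Finset.univ, i ≠ j →
      polar B (e.repr v (inl i) • e (inl i) + e.repr v (inr i) • e (inr i))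
        (e.repr v (inl j) • e (inl j) + e.repr v (inr j) • e (inr j)) = 0 := by
    intro i _ j _ hij
    simp only [polar_add_left, polar_add_right, polar_smul_left, polar_smul_right,
      smul_eq_mul, he.2.1 i j, he.2.2.1 i j, he.2.2.2 i j hij, mul_zero, add_zero, zero_add]
    rw [polar_comm, he.2.2.2 j i (Ne.symm hij)]
    ring
  conv_lhs => rw [hv]
  rw [B_sum_orth _ _ horth]
  refine Finset.sum_congr rfl fun i _ => ?_
  rw [B_add, QuadraticMap.map_smul, QuadraticMap.map_smul, polar_smul_left,
    polar_smul_right, he.1 i, coord_inl e he i v, coord_inr e he i v]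
  simp only [smul_eq_mul]
  ring

/-- Pure-algebra core of the transvection computation. -/
private lemma arf_alg (α β A D : Fin n → F) (c P : F)
    (hP : P = ∑ i : Fin n, ((β i)^2 * A i + (α i)^2 * D i + α i * β i)) :
    ∃ x : F, (∑ i : Fin n, (A i + c^2 * (α i)^2 * P + c * (α i)^2)
        * (D i + c^2 * (β i)^2 * P + c * (β i)^2))
      = (∑ i : Fin n, A i * D i) + x^2 + x := by
  have hP' : P = (∑ i : Fin n, ((β i)^2 * A i + (α i)^2 * D i)) + ∑ i : Fin n, α i * β i :=
    hP.trans Finset.sum_add_distrib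
  have hS : (∑ i : Fin n, ((β i)^2 * A i + (α i)^2 * D i))
      = P + ∑ i : Fin n, α i * β i := by
    linear_combination -hP' + (-(∑ i : Fin n, α i * β i)) * (two0 (F := F))
  refine ⟨c * P + c * (∑ i : Fin n, α i * β i) + c^2 * P * (∑ i : Fin n, α i * β i), ?_⟩
  have key : ∀ i : Fin n, (A i + c^2 * (α i)^2 * P + c * (α i)^2)
        * (D i + c^2 * (β i)^2 * P + c * (β i)^2)
      = A i * D i + (c^2*P + c) * ((β i)^2 * A i + (α i)^2 * D i)
        + (c^4*P^2 + c^2) * (α i * β i)^2 := fun i => by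
    linear_combination (c^3 * (α i)^2 * (β i)^2 * P) * (two0 (F := F))
  have step1 : (∑ i : Fin n, (A i + c^2 * (α i)^2 * P + c * (α i)^2)
        * (D i + c^2 * (β i)^2 * P + c * (β i)^2))
      = (∑ i : Fin n, A i * D i)
        + (c^2*P + c) * (∑ i : Fin n, ((β i)^2 * A i + (α i)^2 * D i))
        + (c^4*P^2 + c^2) * (∑ i : Fin n, (α i * β i)^2) := by
    rw [Finset.mul_sum, Finset.mul_sum, ← Finset.sum_add_distrib, ← Finset.sum_add_distrib]
    exact Finset.sum_congr rfl fun i _ => key i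
  have hsq : (∑ i : Fin n, (α i * β i)^2) = (∑ i : Fin n, α i * β i)^2 :=
    (CharTwo.sum_sq _ _).symm
  rw [step1, hsq, hS]
  linear_combination (-(c^2 * P * (∑ i : Fin n, α i * β i))
    - c^3 * P^2 * (∑ i : Fin n, α i * β i)
    - c^3 * P * (∑ i : Fin n, α i * β i)^2) * (two0 (F := F))

/-- Key computation: a transvection changes the Arf sum by an element of `{x² + x}`. -/
lemma arf_step (e : Fin n ⊕ Fin n → V) (v : V) (c : F)
    (hv : B v = ∑ i : Fin n, ((polar B (e (inr i)) v)^2 * B (e (inl i))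
      + (polar B (e (inl i)) v)^2 * B (e (inr i))
      + polar B (e (inl i)) v * polar B (e (inr i)) v)) :
    ∃ x : F, Arf B n (fun j => Tv B v c (e j)) = Arf B n e + x^2 + x := by
  obtain ⟨x, hx⟩ := arf_alg (fun i => polar B (e (inl i)) v)
    (fun i => polar B (e (inr i)) v) (fun i => B (e (inl i))) (fun i => B (e (inr i)))
    c (B v) hv
  refine ⟨x, ?_⟩
  unfold Arf
  rw [← hx]
  exact Finset.sum_congr rfl fun i _ => by rw [Tv_apply_B, Tv_apply_B]

end Arf2
section Arf3

variable {F : Type*} [Field F] [CharP F 2] {V : Type*} [AddCommGroup V] [Module F V]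
variable (B : QuadraticForm F V) (n : ℕ)

private lemma one_add_one0 : (1:F) + 1 = 0 := by
  rw [one_add_one_eq_two]; exact two0

lemma pstep {a b c : F} (h1 : ∃ x : F, b = a + x^2 + x) (h2 : ∃ x : F, c = b + x^2 + x) :
    ∃ x : F, c = a + x^2 + x := by
  obtain ⟨x, hx⟩ := h1; obtain ⟨y, hy⟩ := h2
  exact ⟨x + y, by rw [hy, hx]; linear_combination (-(x*y)) * (two0 (F := F))⟩

lemma psymm {a b : F} (h : ∃ x : F, a = b + x^2 + x) : ∃ x : F, b = a + x^2 + x := by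
  obtain ⟨x, hx⟩ := h
  exact ⟨x, by rw [hx]; linear_combination (-(x^2) - x) * (two0 (F := F))⟩

/-- agreement of two families on the pairs below `k` -/
def Agree (e f : Fin n ⊕ Fin n → V) (k : Fin n) : Prop :=
  ∀ i : Fin n, (i:ℕ) < (k:ℕ) → f (inl i) = e (inl i) ∧ f (inr i) = e (inr i)

/-- `v` is polar-orthogonal to all pairs below `k` -/
def OB (e : Fin n ⊕ Fin n → V) (k : Fin n) (v : V) : Prop :=
  ∀ i : Fin n, (i:ℕ) < (k:ℕ) → polar B (e (inl i)) v = 0 ∧ polar B (e (inr i)) v = 0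

variable {B n}

lemma OB_add {e : Fin n ⊕ Fin n → V} {k : Fin n} {v w : V}
    (hv : OB B n e k v) (hw : OB B n e k w) : OB B n e k (v + w) := by
  intro i hi
  constructor
  · rw [polar_add_right, (hv i hi).1, (hw i hi).1, add_zero]
  · rw [polar_add_right, (hv i hi).2, (hw i hi).2, add_zero]

lemma OB_e_inl {e : Fin n ⊕ Fin n → V} (he : SympFam B n e) (k : Fin n) :
    OB B n e k (e (inl k)) := by
  intro i hi
  have hik : i ≠ k := fun h => by subst h; exact lt_irrefl _ hi
  exact ⟨he.2.1 i k, by rw [polar_comm]; exact he.2.2.2 k i (Ne.symm hik)⟩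

lemma OB_e_inr {e : Fin n ⊕ Fin n → V} (he : SympFam B n e) (k : Fin n) :
    OB B n e k (e (inr k)) := by
  intro i hi
  have hik : i ≠ k := fun h => by subst h; exact lt_irrefl _ hi
  exact ⟨he.2.2.2 i k hik, he.2.2.1 i k⟩

lemma OB_f_inl {e f : Fin n ⊕ Fin n → V} (hf : SympFam B n f) {k : Fin n}
    (hagree : Agree n e f k) : OB B n e k (f (inl k)) := by
  intro i hi
  have hik : i ≠ k := fun h => by subst h; exact lt_irrefl _ hi
  rw [← (hagree i hi).1, ← (hagree i hi).2]
  exact ⟨hf.2.1 i k, by rw [polar_comm]; exact hf.2.2.2 k i (Ne.symm hik)⟩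

lemma OB_f_inr {e f : Fin n ⊕ Fin n → V} (hf : SympFam B n f) {k : Fin n}
    (hagree : Agree n e f k) : OB B n e k (f (inr k)) := by
  intro i hi
  have hik : i ≠ k := fun h => by subst h; exact lt_irrefl _ hi
  rw [← (hagree i hi).1, ← (hagree i hi).2]
  exact ⟨hf.2.2.2 i k hik, hf.2.2.1 i k⟩

/-- A transvection move on a symplectic basis, preserving agreement below `k`. -/
lemma gmove (e : Fin n ⊕ Fin n → V) (k : Fin n) (f : Module.Basis (Fin n ⊕ Fin n) F V)
    (hf : SympFam B n ⇑f) (hagree : Agree n e ⇑f k) (v : V) (c : F)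
    (hOB : OB B n e k v) :
    ∃ f' : Module.Basis (Fin n ⊕ Fin n) F V, (∀ j, f' j = Tv B v c (f j)) ∧ SympFam B n ⇑f'
      ∧ Agree n e ⇑f' k ∧ ∃ x : F, Arf B n ⇑f' = Arf B n ⇑f + x^2 + x := by
  refine ⟨f.map (TvEquiv B v c), fun j => f.map_apply _ _, ?_, ?_, ?_⟩
  · have hap : ∀ j, (f.map (TvEquiv B v c)) j = Tv B v c (f j) := fun j => f.map_apply _ _
    refine ⟨fun i => ?_, fun i j => ?_, fun i j => ?_, fun i j hij => ?_⟩
    · rw [hap, hap, Tv_polar]; exact hf.1 i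
    · rw [hap, hap, Tv_polar]; exact hf.2.1 i j
    · rw [hap, hap, Tv_polar]; exact hf.2.2.1 i j
    · rw [hap, hap, Tv_polar]; exact hf.2.2.2 i j hij
  · intro i hi
    have hap : ∀ j, (f.map (TvEquiv B v c)) j = Tv B v c (f j) := fun j => f.map_apply _ _
    constructor
    · rw [hap, (hagree i hi).1, Tv_fix _ _ _ _ (hOB i hi).1]
    · rw [hap, (hagree i hi).2, Tv_fix _ _ _ _ (hOB i hi).2]
  · have hap : ∀ j, (f.map (TvEquiv B v c)) j = Tv B v c (f j) := fun j => f.map_apply _ _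
    have := arf_step (B := B) (n := n) (⇑f) v c (B_expand f hf v)
    obtain ⟨x, hx⟩ := this
    exact ⟨x, by rw [Arf_congr B n hap, hx]⟩

end Arf3
section Arf4

variable {F : Type*} [Field F] [CharP F 2] {V : Type*} [AddCommGroup V] [Module F V]
variable {B : QuadraticForm F V} {n : ℕ}

/-- Phase 1: make the `inl k` vector agree. -/
lemma phase1 (e : Fin n ⊕ Fin n → V) (he : SympFam B n e) (k : Fin n)
    (f : Module.Basis (Fin n ⊕ Fin n) F V) (hf : SympFam B n ⇑f) (hagree : Agree n e ⇑f k) :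
    ∃ f' : Module.Basis (Fin n ⊕ Fin n) F V, SympFam B n ⇑f' ∧ Agree n e ⇑f' k
      ∧ f' (inl k) = e (inl k) ∧ ∃ x : F, Arf B n ⇑f' = Arf B n ⇑f + x^2 + x := by
  by_cases h0 : f (inl k) = e (inl k)
  · exact ⟨f, hf, hagree, h0, 0, by ring⟩
  by_cases h1 : polar B (f (inl k)) (e (inl k)) = 0
  · obtain ⟨z, hz1, hz2, hzOB⟩ : ∃ z : V, polar B (f (inl k)) z ≠ 0
        ∧ polar B z (e (inl k)) ≠ 0 ∧ OB B n e k z := by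
      by_cases h3 : polar B (e (inl k)) (f (inr k)) = 0
      · by_cases h4 : polar B (f (inl k)) (e (inr k)) = 0
        · refine ⟨f (inr k) + e (inr k), ?_, ?_, OB_add (OB_f_inr hf hagree) (OB_e_inr he k)⟩
          · rw [polar_add_right, hf.1 k, h4, add_zero]; exact one_ne_zero
          · rw [polar_add_left, polar_comm (⇑B) (f (inr k)) (e (inl k)), h3, zero_add,
              polar_comm (⇑B) (e (inr k)) (e (inl k)), he.1 k]
            exact one_ne_zero
        · refine ⟨e (inr k), h4, ?_, OB_e_inr he k⟩
          rw [polar_comm (⇑B) (e (inr k)) (e (inl k)), he.1 k]; exact one_ne_zero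
      · refine ⟨f (inr k), ?_, ?_, OB_f_inr hf hagree⟩
        · rw [hf.1 k]; exact one_ne_zero
        · rw [polar_comm (⇑B) (f (inr k)) (e (inl k))]; exact h3
    obtain ⟨f1, hap1, hf1, hagree1, harf1⟩ := gmove e k f hf hagree (f (inl k) + z)
      (polar B (f (inl k)) z)⁻¹ (OB_add (OB_f_inl hf hagree) hzOB)
    have hf1l : f1 (inl k) = z := by rw [hap1, Tv_sends _ _ _ hz1]
    obtain ⟨f2, hap2, hf2, hagree2, harf2⟩ := gmove e k f1 hf1 hagree1 (z + e (inl k))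
      (polar B z (e (inl k)))⁻¹ (OB_add hzOB (OB_e_inl he k))
    have hf2l : f2 (inl k) = e (inl k) := by rw [hap2, hf1l, Tv_sends _ _ _ hz2]
    exact ⟨f2, hf2, hagree2, hf2l, pstep harf1 harf2⟩
  · obtain ⟨f1, hap1, hf1, hagree1, harf1⟩ := gmove e k f hf hagree (f (inl k) + e (inl k))
      (polar B (f (inl k)) (e (inl k)))⁻¹ (OB_add (OB_f_inl hf hagree) (OB_e_inl he k))
    have hf1l : f1 (inl k) = e (inl k) := by rw [hap1, Tv_sends _ _ _ h1]
    exact ⟨f1, hf1, hagree1, hf1l, harf1⟩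

/-- Phase 2: make the `inr k` vector agree, keeping `inl k`. -/
lemma phase2 (e : Fin n ⊕ Fin n → V) (he : SympFam B n e) (k : Fin n)
    (f : Module.Basis (Fin n ⊕ Fin n) F V) (hf : SympFam B n ⇑f) (hagree : Agree n e ⇑f k)
    (hfl : f (inl k) = e (inl k)) :
    ∃ f' : Module.Basis (Fin n ⊕ Fin n) F V, SympFam B n ⇑f' ∧ Agree n e ⇑f' k
      ∧ f' (inl k) = e (inl k) ∧ f' (inr k) = e (inr k)
      ∧ ∃ x : F, Arf B n ⇑f' = Arf B n ⇑f + x^2 + x := by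
  have hq : polar B (e (inl k)) (f (inr k)) = 1 := by rw [← hfl]; exact hf.1 k
  by_cases h0 : f (inr k) = e (inr k)
  · exact ⟨f, hf, hagree, hfl, h0, 0, by ring⟩
  by_cases h2 : polar B (f (inr k)) (e (inr k)) = 0
  · -- two moves through e (inl k) + e (inr k)
    have hd1 : polar B (f (inr k)) (e (inl k) + e (inr k)) ≠ 0 := by
      rw [polar_add_right, polar_comm (⇑B) (f (inr k)) (e (inl k)), hq, h2, add_zero]
      exact one_ne_zero
    obtain ⟨f1, hap1, hf1, hagree1, harf1⟩ := gmove e k f hf hagree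
      (f (inr k) + (e (inl k) + e (inr k)))
      (polar B (f (inr k)) (e (inl k) + e (inr k)))⁻¹
      (OB_add (OB_f_inr hf hagree) (OB_add (OB_e_inl he k) (OB_e_inr he k)))
    have hf1r : f1 (inr k) = e (inl k) + e (inr k) := by
      rw [hap1, Tv_sends _ _ _ hd1]
    have hfix1 : polar B (e (inl k)) (f (inr k) + (e (inl k) + e (inr k))) = 0 := by
      rw [polar_add_right, polar_add_right, hq, polar_vv, zero_add, he.1 k, one_add_one0]
    have hf1l : f1 (inl k) = e (inl k) := by
      rw [hap1, hfl, Tv_fix _ _ _ _ hfix1]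
    have hd2 : polar B (e (inl k) + e (inr k)) (e (inr k)) ≠ 0 := by
      rw [polar_add_left, he.1 k, polar_vv, add_zero]; exact one_ne_zero
    obtain ⟨f2, hap2, hf2, hagree2, harf2⟩ := gmove e k f1 hf1 hagree1
      ((e (inl k) + e (inr k)) + e (inr k))
      (polar B (e (inl k) + e (inr k)) (e (inr k)))⁻¹
      (OB_add (OB_add (OB_e_inl he k) (OB_e_inr he k)) (OB_e_inr he k))
    have hf2r : f2 (inr k) = e (inr k) := by
      rw [hap2, hf1r, Tv_sends _ _ _ hd2]
    have hfix2 : polar B (e (inl k)) ((e (inl k) + e (inr k)) + e (inr k)) = 0 := by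
      rw [polar_add_right, polar_add_right, polar_vv, zero_add, he.1 k, one_add_one0]
    have hf2l : f2 (inl k) = e (inl k) := by
      rw [hap2, hf1l, Tv_fix _ _ _ _ hfix2]
    exact ⟨f2, hf2, hagree2, hf2l, hf2r, pstep harf1 harf2⟩
  · -- one move
    obtain ⟨f1, hap1, hf1, hagree1, harf1⟩ := gmove e k f hf hagree
      (f (inr k) + e (inr k)) (polar B (f (inr k)) (e (inr k)))⁻¹
      (OB_add (OB_f_inr hf hagree) (OB_e_inr he k))
    have hf1r : f1 (inr k) = e (inr k) := by rw [hap1, Tv_sends _ _ _ h2]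
    have hfix1 : polar B (e (inl k)) (f (inr k) + e (inr k)) = 0 := by
      rw [polar_add_right, hq, he.1 k, one_add_one0]
    have hf1l : f1 (inl k) = e (inl k) := by
      rw [hap1, hfl, Tv_fix _ _ _ _ hfix1]
    exact ⟨f1, hf1, hagree1, hf1l, hf1r, harf1⟩

lemma fixpair (e : Fin n ⊕ Fin n → V) (he : SympFam B n e) (k : Fin n)
    (f : Module.Basis (Fin n ⊕ Fin n) F V) (hf : SympFam B n ⇑f) (hagree : Agree n e ⇑f k) :
    ∃ f' : Module.Basis (Fin n ⊕ Fin n) F V, SympFam B n ⇑f'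
      ∧ (∀ i : Fin n, (i:ℕ) < (k:ℕ)+1 → f' (inl i) = e (inl i) ∧ f' (inr i) = e (inr i))
      ∧ ∃ x : F, Arf B n ⇑f' = Arf B n ⇑f + x^2 + x := by
  obtain ⟨f1, hf1, hagree1, hf1l, harf1⟩ := phase1 e he k f hf hagree
  obtain ⟨f2, hf2, hagree2, hf2l, hf2r, harf2⟩ := phase2 e he k f1 hf1 hagree1 hf1l
  refine ⟨f2, hf2, ?_, pstep harf1 harf2⟩
  intro i hi
  rcases Nat.lt_succ_iff_lt_or_eq.mp hi with h | h
  · exact hagree2 i h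
  · have : i = k := Fin.ext h
    subst this; exact ⟨hf2l, hf2r⟩

lemma connect (e : Module.Basis (Fin n ⊕ Fin n) F V) (he : SympFam B n ⇑e) :
    ∀ m : ℕ, ∀ f : Module.Basis (Fin n ⊕ Fin n) F V, SympFam B n ⇑f →
    (∀ i : Fin n, (i:ℕ) < n - m → (f (inl i) = e (inl i) ∧ f (inr i) = e (inr i))) →
    ∃ x : F, Arf B n ⇑e = Arf B n ⇑f + x^2 + x := by
  intro m
  induction m with
  | zero =>
    intro f hf hag
    have hEq : Arf B n ⇑f = Arf B n ⇑e := by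
      unfold Arf
      refine Finset.sum_congr rfl fun i _ => ?_
      have hi : (i:ℕ) < n - 0 := lt_of_lt_of_le i.isLt (by omega)
      rw [(hag i hi).1, (hag i hi).2]
    exact ⟨0, by rw [hEq]; ring⟩
  | succ m ih =>
    intro f hf hag
    by_cases hnm : n ≤ m
    · exact ih f hf (fun i hi => absurd hi (by omega))
    · have hkpf : n - (m+1) < n := by omega
      set k : Fin n := ⟨n - (m+1), hkpf⟩ with hkdef
      have hk : (k:ℕ) = n - (m+1) := rfl
      have hag' : Agree n ⇑e ⇑f k := by
        intro i hi
        exact hag i (by omega)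
      obtain ⟨f', hf', hag'', harf⟩ := fixpair ⇑e he k f hf hag'
      have hagnext : ∀ i : Fin n, (i:ℕ) < n - m →
          f' (inl i) = e (inl i) ∧ f' (inr i) = e (inr i) := by
        intro i hi
        exact hag'' i (by omega)
      exact pstep harf (ih f' hf' hagnext)

lemma core (e f : Module.Basis (Fin n ⊕ Fin n) F V) (he : SympFam B n ⇑e) (hf : SympFam B n ⇑f) :
    ∃ x : F, Arf B n ⇑e = Arf B n ⇑f + x^2 + x :=
  connect e he n f hf (fun i hi => absurd hi (by omega))

end Arf4
end ArfAux
/-- **Arf invariants of similar non-singular quadratic forms in characteristic 2 agree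
up to an element of `{x² + x}`.** If `B`, `B'` are non-singular quadratic forms on a
`2n`-dimensional space `V` over a field `F` of characteristic 2 with `B = s·(B' ∘ A)`
for some `s ≠ 0` and bijective linear `A`, then for any symplectic bases with respect to
the polar forms of `B` resp. `B'`, the corresponding Arf invariants differ by `x² + x`
for some `x ∈ F`. -/
theorem stmt_8 (F : Type*) [Field F] [CharP F 2]
    (V : Type*) [AddCommGroup V] [Module F V]
    (n : ℕ) (hn : 1 ≤ n) (hdim : Module.finrank F V = 2 * n)
    (B B' : QuadraticForm F V)
    (hB : ∀ v : V, (∀ w : V, QuadraticMap.polar B v w = 0) → v = 0)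
    (hB' : ∀ v : V, (∀ w : V, QuadraticMap.polar B' v w = 0) → v = 0)
    (s : F) (hs : s ≠ 0) (A : V ≃ₗ[F] V)
    (hsim : ∀ v : V, B v = s * B' (A v))
    (ba : Module.Basis (Fin n ⊕ Fin n) F V)
    (hba1 : ∀ i : Fin n, QuadraticMap.polar B (ba (Sum.inl i)) (ba (Sum.inr i)) = 1)
    (hba2 : ∀ i j : Fin n, QuadraticMap.polar B (ba (Sum.inl i)) (ba (Sum.inl j)) = 0)
    (hba3 : ∀ i j : Fin n, QuadraticMap.polar B (ba (Sum.inr i)) (ba (Sum.inr j)) = 0)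
    (hba4 : ∀ i j : Fin n, i ≠ j →
      QuadraticMap.polar B (ba (Sum.inl i)) (ba (Sum.inr j)) = 0)
    (ba' : Module.Basis (Fin n ⊕ Fin n) F V)
    (hba'1 : ∀ i : Fin n, QuadraticMap.polar B' (ba' (Sum.inl i)) (ba' (Sum.inr i)) = 1)
    (hba'2 : ∀ i j : Fin n, QuadraticMap.polar B' (ba' (Sum.inl i)) (ba' (Sum.inl j)) = 0)
    (hba'3 : ∀ i j : Fin n, QuadraticMap.polar B' (ba' (Sum.inr i)) (ba' (Sum.inr j)) = 0)
    (hba'4 : ∀ i j : Fin n, i ≠ j →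
      QuadraticMap.polar B' (ba' (Sum.inl i)) (ba' (Sum.inr j)) = 0) :
    ∃ x : F, (∑ i : Fin n, B (ba (Sum.inl i)) * B (ba (Sum.inr i)))
      = (∑ i : Fin n, B' (ba' (Sum.inl i)) * B' (ba' (Sum.inr i))) + x ^ 2 + x := by
  classical
  set u : Fin n ⊕ Fin n → Fˣ := Sum.elim (fun _ => 1) (fun _ => (Units.mk0 s hs)⁻¹) with hu
  set f : Module.Basis (Fin n ⊕ Fin n) F V := (ba'.map A.symm).unitsSMul u with hfdef
  have hfl : ∀ i : Fin n, f (inl i) = A.symm (ba' (inl i)) := by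
    intro i
    rw [hfdef, Module.Basis.unitsSMul_apply, Module.Basis.map_apply, hu]
    simp
  have hfr : ∀ i : Fin n, f (inr i) = (s⁻¹ : F) • A.symm (ba' (inr i)) := by
    intro i
    rw [hfdef, Module.Basis.unitsSMul_apply, Module.Basis.map_apply, hu]
    simp [Units.smul_def]
  have hBA : ∀ x : V, B (A.symm x) = s * B' x := by
    intro x; rw [hsim (A.symm x), A.apply_symm_apply]
  have hpol : ∀ x y : V, polar B (A.symm x) (A.symm y) = s * polar B' x y := by
    intro x y
    simp only [QuadraticMap.polar, ← map_add, hBA]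
    ring
  have hsymp_f : SympFam B n ⇑f := by
    refine ⟨fun i => ?_, fun i j => ?_, fun i j => ?_, fun i j hij => ?_⟩
    · rw [hfl, hfr, polar_smul_right, hpol, hba'1 i, smul_eq_mul, mul_one,
        inv_mul_cancel₀ hs]
    · rw [hfl, hfl, hpol, hba'2 i j, mul_zero]
    · rw [hfr, hfr, polar_smul_left, polar_smul_right, hpol, hba'3 i j]
      simp
    · rw [hfl, hfr, polar_smul_right, hpol, hba'4 i j hij, mul_zero, smul_zero]
  have hsymp_ba : SympFam B n ⇑ba := ⟨hba1, hba2, hba3, hba4⟩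
  have hArf_f : Arf B n ⇑f = ∑ i : Fin n, B' (ba' (inl i)) * B' (ba' (inr i)) := by
    unfold Arf
    refine Finset.sum_congr rfl fun i _ => ?_
    rw [hfl, hfr, QuadraticMap.map_smul, hBA, hBA, smul_eq_mul]
    field_simp
  obtain ⟨x, hx⟩ := core ba f hsymp_ba hsymp_f
  refine ⟨x, ?_⟩
  have h1 : Arf B n ⇑ba = ∑ i : Fin n, B (ba (inl i)) * B (ba (inr i)) := rfl
  rw [← h1, hx, hArf_f]
end

section
/- Let F be a finite field of characteristic 2. There is no bijective F-linear map λ : F⁴ → F⁴ such that the image under λ of V(f₂,h₂) equals V(g₂,h₂). -/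
section Aux

variable {F : Type*} [Field F] [CharP F 2]

private lemma two_eq_zero' : (2 : F) = 0 := by
  exact_mod_cast CharP.cast_eq_zero F 2

private lemma chr2_eq {a b : F} (h : a + b = 0) : a = b := by
  have h2 : (2 : F) = 0 := two_eq_zero'
  linear_combination h - b * h2

/-- Key algebraic lemma for the target variety: if `g(w)=0`, `h(w)=0` and
`g(v+w)=0` with `v = (1,1,1,1)`, then `w` is constant. -/
private lemma keyT (p q r s : F)
    (hg : p ^ 2 + q ^ 2 + p * q + r * s = 0)
    (hh : p ^ 2 * q + p * q ^ 2 + r ^ 2 * s + r * s ^ 2 = 0)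
    (hB : (1 + p) ^ 2 + (1 + q) ^ 2 + (1 + p) * (1 + q) + (1 + r) * (1 + s) = 0) :
    q = p ∧ r = p ∧ s = p := by
  have h2 : (2 : F) = 0 := two_eq_zero'
  have hs : s = p + q + r := by linear_combination hB - hg - (2 + 2*p + 2*q + r) * h2
  subst hs
  have hcube : (p + q) ^ 3 = 0 := by
    linear_combination hh - (p + q) * hg +
      (2*p^2*q + 2*p*q^2 - q*r^2 - p*r^2 + p^3 + q^3 - r^3) * h2
  have hpq : p + q = 0 := by
    exact pow_eq_zero_iff (n := 3) (by norm_num) |>.1 hcube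
  have hq : p = q := chr2_eq hpq
  have hr2 : (p + r) ^ 2 = 0 := by
    linear_combination hg + (r - q) * hq - q ^ 2 * h2
  have hr : r = p := by
    have h' := pow_eq_zero_iff (n := 2) (by norm_num) |>.1 hr2
    exact (chr2_eq h').symm
  refine ⟨hq.symm, hr, ?_⟩
  linear_combination hr - hq + p * h2

private lemma pick (u b₁ b₂ : Fin 4 → F) (i j : Fin 4)
    (h1i : b₁ i = 0) (h2i : b₂ i = 1) (h1j : b₁ j = 1) (h2j : b₂ j = 0) :
    (∀ c : F, b₁ ≠ c • u) ∨ (∀ c : F, b₂ ≠ c • u) := by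
  by_contra hcon
  push_neg at hcon
  obtain ⟨⟨c, hc⟩, ⟨c', hc'⟩⟩ := hcon
  have e1 : (1 : F) = c' * u i := by rw [← h2i, hc']; rfl
  have e2 : (0 : F) = c' * u j := by rw [← h2j, hc']; rfl
  have e3 : (1 : F) = c * u j := by rw [← h1j, hc]; rfl
  have hc'ne : c' ≠ 0 := by rintro rfl; simp at e1
  have huj : u j = 0 := by
    rcases mul_eq_zero.1 e2.symm with h | h
    · exact absurd h hc'ne
    · exact h
  rw [huj, mul_zero] at e3
  exact one_ne_zero e3

/-- Every point of `V(f₂, h₂)` lies in a 2-dimensional linear subspace contained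
in `V(f₂, h₂)`: there is a companion point `w`, not a scalar multiple of `u`,
with `w` and `u + w` both in the variety. -/
private lemma structS (u : Fin 4 → F)
    (hf : u 0 * u 1 + u 2 * u 3 = 0)
    (hh : (u 0) ^ 2 * u 1 + u 0 * (u 1) ^ 2 + (u 2) ^ 2 * u 3 + u 2 * (u 3) ^ 2 = 0) :
    ∃ w : Fin 4 → F,
      (w 0 * w 1 + w 2 * w 3 = 0 ∧
        (w 0) ^ 2 * w 1 + w 0 * (w 1) ^ 2 + (w 2) ^ 2 * w 3 + w 2 * (w 3) ^ 2 = 0) ∧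
      ((u 0 + w 0) * (u 1 + w 1) + (u 2 + w 2) * (u 3 + w 3) = 0 ∧
        (u 0 + w 0) ^ 2 * (u 1 + w 1) + (u 0 + w 0) * (u 1 + w 1) ^ 2 +
          (u 2 + w 2) ^ 2 * (u 3 + w 3) + (u 2 + w 2) * (u 3 + w 3) ^ 2 = 0) ∧
      (∀ c : F, w ≠ c • u) := by
  have h2 : (2 : F) = 0 := two_eq_zero'
  by_cases h01 : u 0 * u 1 = 0
  · have h23 : u 2 * u 3 = 0 := by linear_combination hf - h01
    rcases mul_eq_zero.1 h01 with h0 | h1 <;> rcases mul_eq_zero.1 h23 with hA | hB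
    · -- u 0 = 0, u 2 = 0 : plane spanned by e₁, e₃
      rcases pick u ![0,1,0,0] ![0,0,0,1] 3 1 (by simp) (by simp) (by simp) (by simp)
        with hp | hp
      · refine ⟨![0,1,0,0], ⟨by simp, by simp⟩, ⟨?_, ?_⟩, hp⟩ <;>
          · simp [h0, hA]
      · refine ⟨![0,0,0,1], ⟨by simp, by simp⟩, ⟨?_, ?_⟩, hp⟩ <;>
          · simp [h0, hA]
    · -- u 0 = 0, u 3 = 0 : plane spanned by e₁, e₂
      rcases pick u ![0,1,0,0] ![0,0,1,0] 2 1 (by simp) (by simp) (by simp) (by simp)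
        with hp | hp
      · refine ⟨![0,1,0,0], ⟨by simp, by simp⟩, ⟨?_, ?_⟩, hp⟩ <;>
          · simp [h0, hB]
      · refine ⟨![0,0,1,0], ⟨by simp, by simp⟩, ⟨?_, ?_⟩, hp⟩ <;>
          · simp [h0, hB]
    · -- u 1 = 0, u 2 = 0 : plane spanned by e₀, e₃
      rcases pick u ![1,0,0,0] ![0,0,0,1] 3 0 (by simp) (by simp) (by simp) (by simp)
        with hp | hp
      · refine ⟨![1,0,0,0], ⟨by simp, by simp⟩, ⟨?_, ?_⟩, hp⟩ <;>
          · simp [h1, hA]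
      · refine ⟨![0,0,0,1], ⟨by simp, by simp⟩, ⟨?_, ?_⟩, hp⟩ <;>
          · simp [h1, hA]
    · -- u 1 = 0, u 3 = 0 : plane spanned by e₀, e₂
      rcases pick u ![1,0,0,0] ![0,0,1,0] 2 0 (by simp) (by simp) (by simp) (by simp)
        with hp | hp
      · refine ⟨![1,0,0,0], ⟨by simp, by simp⟩, ⟨?_, ?_⟩, hp⟩ <;>
          · simp [h1, hB]
      · refine ⟨![0,0,1,0], ⟨by simp, by simp⟩, ⟨?_, ?_⟩, hp⟩ <;>
          · simp [h1, hB]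
  · -- diagonal case
    have h23 : u 2 * u 3 = u 0 * u 1 := by linear_combination hf - (u 0 * u 1) * h2
    have hmul : u 0 * u 1 * (u 0 + u 1 + u 2 + u 3) = 0 := by
      linear_combination hh - (u 2 + u 3) * h23
    have hσ : u 0 + u 1 + u 2 + u 3 = 0 :=
      (mul_eq_zero.1 hmul).resolve_left h01
    have hcase : (u 2 + u 0) * (u 2 + u 1) = 0 := by
      linear_combination u 2 * hσ + hf - (u 2 * u 3) * h2
    rcases mul_eq_zero.1 hcase with hc | hc
    · -- u 2 = u 0, u 3 = u 1 : plane {(x,y,x,y)}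
      have h20 : u 2 = u 0 := chr2_eq hc
      have h31 : u 3 = u 1 := by linear_combination hσ - hc - u 1 * h2
      rcases pick u ![1,0,1,0] ![0,1,0,1] 1 0 (by simp) (by simp) (by simp) (by simp)
        with hp | hp
      · refine ⟨![1,0,1,0], ⟨by simp, by simp⟩, ⟨?_, ?_⟩, hp⟩ <;>
          simp only [Matrix.cons_val_zero, Matrix.cons_val_one, Matrix.head_cons,
            Matrix.cons_val_two, Matrix.tail_cons, Matrix.cons_val_three] <;>
          rw [h20, h31]
        · linear_combination ((u 0 + 1) * u 1) * h2
        · linear_combination ((u 0 + 1) ^ 2 * u 1 + (u 0 + 1) * u 1 ^ 2) * h2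
      · refine ⟨![0,1,0,1], ⟨by simp, by simp⟩, ⟨?_, ?_⟩, hp⟩ <;>
          simp only [Matrix.cons_val_zero, Matrix.cons_val_one, Matrix.head_cons,
            Matrix.cons_val_two, Matrix.tail_cons, Matrix.cons_val_three] <;>
          rw [h20, h31]
        · linear_combination (u 0 * (u 1 + 1)) * h2
        · linear_combination (u 0 ^ 2 * (u 1 + 1) + u 0 * (u 1 + 1) ^ 2) * h2
    · -- u 2 = u 1, u 3 = u 0 : plane {(x,y,y,x)}
      have h21 : u 2 = u 1 := chr2_eq hc
      have h30 : u 3 = u 0 := by linear_combination hσ - hc - u 0 * h2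
      rcases pick u ![1,0,0,1] ![0,1,1,0] 1 0 (by simp) (by simp) (by simp) (by simp)
        with hp | hp
      · refine ⟨![1,0,0,1], ⟨by simp, by simp⟩, ⟨?_, ?_⟩, hp⟩ <;>
          simp only [Matrix.cons_val_zero, Matrix.cons_val_one, Matrix.head_cons,
            Matrix.cons_val_two, Matrix.tail_cons, Matrix.cons_val_three] <;>
          rw [h21, h30]
        · linear_combination ((u 0 + 1) * u 1) * h2
        · linear_combination ((u 0 + 1) ^ 2 * u 1 + (u 0 + 1) * u 1 ^ 2) * h2
      · refine ⟨![0,1,1,0], ⟨by simp, by simp⟩, ⟨?_, ?_⟩, hp⟩ <;>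
          simp only [Matrix.cons_val_zero, Matrix.cons_val_one, Matrix.head_cons,
            Matrix.cons_val_two, Matrix.tail_cons, Matrix.cons_val_three] <;>
          rw [h21, h30]
        · linear_combination (u 0 * (u 1 + 1)) * h2
        · linear_combination (u 0 ^ 2 * (u 1 + 1) + u 0 * (u 1 + 1) ^ 2) * h2

end Aux

/-- **Case `r = 2` of the key problem over finite fields**: over a finite field `F` of
characteristic 2, no bijective `F`-linear map of `F⁴` takes `V(f₂, h₂)` onto
`V(g₂, h₂)`, where, with coordinates `(x₁, y₁, x₂, y₂) = (v 0, v 1, v 2, v 3)`,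
`f₂ = x₁y₁ + x₂y₂`, `g₂ = x₁² + y₁² + x₁y₁ + x₂y₂`,
`h₂ = x₁²y₁ + x₁y₁² + x₂²y₂ + x₂y₂²`. -/
theorem stmt_10 (F : Type*) [Field F] [Fintype F] [CharP F 2] :
    ¬ ∃ l : (Fin 4 → F) →ₗ[F] (Fin 4 → F), Function.Bijective l ∧
      l '' {v : Fin 4 → F | v 0 * v 1 + v 2 * v 3 = 0 ∧
            (v 0) ^ 2 * v 1 + v 0 * (v 1) ^ 2 + (v 2) ^ 2 * v 3 + v 2 * (v 3) ^ 2 = 0}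
        = {v : Fin 4 → F | (v 0) ^ 2 + (v 1) ^ 2 + v 0 * v 1 + v 2 * v 3 = 0 ∧
            (v 0) ^ 2 * v 1 + v 0 * (v 1) ^ 2 + (v 2) ^ 2 * v 3 + v 2 * (v 3) ^ 2 = 0} := by
  rintro ⟨l, hbij, himg⟩
  have h2 : (2 : F) = 0 := two_eq_zero'
  set v : Fin 4 → F := fun _ => 1 with hv_def
  have hvT : v ∈ {v : Fin 4 → F | (v 0) ^ 2 + (v 1) ^ 2 + v 0 * v 1 + v 2 * v 3 = 0 ∧
      (v 0) ^ 2 * v 1 + v 0 * (v 1) ^ 2 + (v 2) ^ 2 * v 3 + v 2 * (v 3) ^ 2 = 0} := by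
    constructor <;> simp [hv_def] <;> linear_combination 2 * h2
  rw [← himg] at hvT
  obtain ⟨u, ⟨huf, huh⟩, hlu⟩ := hvT
  obtain ⟨w, ⟨hwf, hwh⟩, ⟨hswf, hswh⟩, hind⟩ := structS u huf huh
  have hwT : l w ∈ {v : Fin 4 → F | (v 0) ^ 2 + (v 1) ^ 2 + v 0 * v 1 + v 2 * v 3 = 0 ∧
      (v 0) ^ 2 * v 1 + v 0 * (v 1) ^ 2 + (v 2) ^ 2 * v 3 + v 2 * (v 3) ^ 2 = 0} := by
    rw [← himg]; exact ⟨w, ⟨hwf, hwh⟩, rfl⟩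
  have hswT : l (u + w) ∈ {v : Fin 4 → F |
      (v 0) ^ 2 + (v 1) ^ 2 + v 0 * v 1 + v 2 * v 3 = 0 ∧
      (v 0) ^ 2 * v 1 + v 0 * (v 1) ^ 2 + (v 2) ^ 2 * v 3 + v 2 * (v 3) ^ 2 = 0} := by
    rw [← himg]
    refine ⟨u + w, ⟨?_, ?_⟩, rfl⟩ <;> simpa [Pi.add_apply] using (by assumption : _)
  rw [map_add, hlu] at hswT
  have hB : (1 + l w 0) ^ 2 + (1 + l w 1) ^ 2 + (1 + l w 0) * (1 + l w 1) +
      (1 + l w 2) * (1 + l w 3) = 0 := by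
    have := hswT.1
    simpa [hv_def, Pi.add_apply] using this
  obtain ⟨hq, hr, hs⟩ := keyT (l w 0) (l w 1) (l w 2) (l w 3) hwT.1 hwT.2 hB
  have hlw : l w = (l w 0) • v := by
    funext i
    fin_cases i <;> simp [hv_def, hq, hr, hs]
  rw [← hlu, ← map_smul] at hlw
  exact hind (l w 0) (hbij.1 hlw)
end

section
/- Let F be a finite field of characteristic 2 with q elements. Then the number of tuples (x₁,y₁,x₂,y₂) ∈ F⁴ satisfying x₁y₁ + x₂y₂ = 0 and x₁²y₁ + x₁y₁² + x₂²y₂ + x₂y₂² = 0 equals 6q² − 9q + 4. -/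
section aux
variable {α : Type*} [Fintype α]

lemma card_or_aux (p q : α → Prop) (h : ∀ x, p x → q x → False) :
    Nat.card {x // p x ∨ q x} = Nat.card {x // p x} + Nat.card {x // q x} := by
  classical
  simp only [Nat.card_eq_fintype_card, Fintype.card_subtype]
  rw [Finset.filter_or, Finset.card_union_of_disjoint]
  rw [Finset.disjoint_filter]
  intro x _ hp hq
  exact h x hp hq

lemma card_and_add_aux (p q : α → Prop) :
    Nat.card {x // p x ∧ q x} + Nat.card {x // p x ∧ ¬ q x} = Nat.card {x // p x} := by
  classical
  simp only [Nat.card_eq_fintype_card, Fintype.card_subtype]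
  have hd : Disjoint (Finset.univ.filter fun x => p x ∧ q x)
      (Finset.univ.filter fun x => p x ∧ ¬ q x) := by
    rw [Finset.disjoint_filter]
    intro x _ h1 h2
    exact h2.2 h1.2
  rw [← Finset.card_union_of_disjoint hd, ← Finset.filter_or]
  exact congrArg Finset.card (Finset.filter_congr fun x _ => by tauto)

lemma card_compl_add_aux (p : α → Prop) :
    Nat.card {x // p x} + Nat.card {x // ¬ p x} = Nat.card α := by
  classical
  rw [← Nat.card_sum]
  exact Nat.card_congr (Equiv.sumCompl p)

end aux

section main
variable (F : Type*) [Field F] [Fintype F] [CharP F 2]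

lemma key_iff (x₁ y₁ x₂ y₂ : F) :
    (x₁ * y₁ + x₂ * y₂ = 0 ∧
      x₁ ^ 2 * y₁ + x₁ * y₁ ^ 2 + x₂ ^ 2 * y₂ + x₂ * y₂ ^ 2 = 0) ↔
    ((x₁ * y₁ = 0 ∧ x₂ * y₂ = 0) ∨
      ((x₁ * y₁ ≠ 0 ∧ x₂ = x₁ ∧ y₂ = y₁) ∨
       (x₁ * y₁ ≠ 0 ∧ x₁ ≠ y₁ ∧ x₂ = y₁ ∧ y₂ = x₁))) := by
  have h2 : (2 : F) = 0 := CharTwo.two_eq_zero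
  have hch : ∀ a b : F, a + b = 0 ↔ a = b := by
    intro a b
    constructor
    · intro h; linear_combination h - b * h2
    · intro h; linear_combination h + b * h2
  constructor
  · rintro ⟨hf, hh⟩
    have hab : x₂ * y₂ = x₁ * y₁ := ((hch _ _).1 hf).symm
    by_cases ha : x₁ * y₁ = 0
    · exact Or.inl ⟨ha, hab.trans ha⟩
    · right
      have hx₁ : x₁ ≠ 0 := fun h => ha (by rw [h, zero_mul])
      have hy₁ : y₁ ≠ 0 := fun h => ha (by rw [h, mul_zero])
      have hs : x₂ + y₂ = x₁ + y₁ := by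
        have hz : x₁ * y₁ * ((x₁ + y₁) + (x₂ + y₂)) = 0 := by
          linear_combination hh + (x₂ + y₂) * hab + (x₁*y₁*x₂ + x₁*y₁*y₂ - x₂*y₂^2 - x₂^2*y₂) * h2
        have := (mul_eq_zero.1 hz).resolve_left ha
        exact ((hch _ _).1 (by linear_combination this)).symm
      have hsplit : (x₂ + x₁) * (x₂ + y₁) = 0 := by
        linear_combination x₂ * hs + hab + 2 * x₂ ^ 2 * h2 - x₂ ^ 2 * h2 + x₂ * y₂ * h2 + (x₂*x₁ + x₂*y₁ - 2*x₂*y₂ - x₂^2 + x₁*y₁) * h2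
      rcases mul_eq_zero.1 hsplit with hc | hc
      · left
        have hx : x₂ = x₁ := (hch _ _).1 hc
        refine ⟨ha, hx, ?_⟩
        have h' : x₁ * y₂ = x₁ * y₁ := by rw [hx] at hab; exact hab
        exact mul_left_cancel₀ hx₁ h'
      · have hx : x₂ = y₁ := (hch _ _).1 hc
        by_cases hxy : x₁ = y₁
        · left
          have hx' : x₂ = x₁ := by rw [hx, hxy]
          refine ⟨ha, hx', ?_⟩
          have h' : x₁ * y₂ = x₁ * y₁ := by rw [hx'] at hab; exact hab
          exact mul_left_cancel₀ hx₁ h'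
        · right
          refine ⟨ha, hxy, hx, ?_⟩
          have h' : y₁ * y₂ = y₁ * x₁ := by rw [hx] at hab; linear_combination hab
          exact mul_left_cancel₀ hy₁ h'
  · rintro (⟨h1, h2'⟩ | ⟨-, hx, hy⟩ | ⟨-, -, hx, hy⟩)
    · constructor
      · rw [h1, h2', add_zero]
      · linear_combination (x₁ + y₁) * h1 + (x₂ + y₂) * h2'
    · rw [hx, hy]
      constructor
      · linear_combination x₁ * y₁ * h2
      · linear_combination (x₁ ^ 2 * y₁ + x₁ * y₁ ^ 2) * h2
    · rw [hx, hy]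
      constructor
      · linear_combination x₁ * y₁ * h2
      · linear_combination (x₁ ^ 2 * y₁ + x₁ * y₁ ^ 2) * h2

end main

/-- **Cardinality of `V(f₂, h₂)`**: over a finite field `F` of characteristic 2 with
`q` elements, the number of `(x₁, y₁, x₂, y₂) ∈ F⁴` with `x₁y₁ + x₂y₂ = 0` and
`x₁²y₁ + x₁y₁² + x₂²y₂ + x₂y₂² = 0` equals `6q² - 9q + 4`. -/
theorem stmt_11 (F : Type*) [Field F] [Fintype F] [CharP F 2] :
    Nat.card {v : Fin 4 → F // v 0 * v 1 + v 2 * v 3 = 0 ∧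
        (v 0) ^ 2 * v 1 + v 0 * (v 1) ^ 2 + (v 2) ^ 2 * v 3 + v 2 * (v 3) ^ 2 = 0}
      = 6 * (Fintype.card F) ^ 2 - 9 * Fintype.card F + 4 := by
  classical
  obtain ⟨k, hk⟩ : ∃ k, Fintype.card F = k + 2 := by
    have := Fintype.one_lt_card (α := F)
    exact ⟨Fintype.card F - 2, by omega⟩
  -- the master equivalence
  let e : (Fin 4 → F) ≃ (F × F) × (F × F) :=
    { toFun := fun v => ((v 0, v 1), (v 2, v 3))
      invFun := fun p => ![p.1.1, p.1.2, p.2.1, p.2.2]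
      left_inv := fun v => by funext i; fin_cases i <;> rfl
      right_inv := fun p => rfl }
  -- cardinality of nonzero elements
  have hne : Nat.card {x : F // x ≠ 0} = k + 1 := by
    rw [← Nat.card_congr unitsEquivNeZero, Nat.card_eq_fintype_card, Fintype.card_units, hk]
    omega

  -- Z : card of pairs with product zero
  have hZ : Nat.card {a : F × F // a.1 * a.2 = 0} = 2 * k + 3 := by
    have h1 := card_compl_add_aux (α := F × F) (fun a => a.1 * a.2 = 0)
    have h2 : Nat.card {a : F × F // ¬ a.1 * a.2 = 0} = (k + 1) * (k + 1) := by
      rw [Nat.card_congr ((Equiv.subtypeEquivRight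
          (q := fun a : F × F => a.1 ≠ 0 ∧ a.2 ≠ 0) (fun a => mul_ne_zero_iff)).trans
        (Equiv.subtypeProdEquivProd (p := fun x : F => x ≠ 0) (q := fun x : F => x ≠ 0))),
        Nat.card_prod, hne]
    rw [h2] at h1
    have h3 : Nat.card (F × F) = (k + 2) * (k + 2) := by
      rw [Nat.card_prod, Nat.card_eq_fintype_card, hk]
    rw [h3] at h1
    nlinarith [h1]
  -- W : card of pairs with product nonzero
  have hW : Nat.card {a : F × F // a.1 * a.2 ≠ 0} = (k + 1) * (k + 1) := by
      rw [Nat.card_congr ((Equiv.subtypeEquivRight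
          (q := fun a : F × F => a.1 ≠ 0 ∧ a.2 ≠ 0) (fun a => mul_ne_zero_iff)).trans
        (Equiv.subtypeProdEquivProd (p := fun x : F => x ≠ 0) (q := fun x : F => x ≠ 0))),
        Nat.card_prod, hne]
  -- W' : product nonzero and distinct coordinates
  have hW' : Nat.card {a : F × F // a.1 * a.2 ≠ 0 ∧ a.1 ≠ a.2} = k * (k + 1) := by
    have h1 := card_and_add_aux (α := F × F) (fun a => a.1 * a.2 ≠ 0) (fun a => a.1 ≠ a.2)
    have hdiag : Nat.card {a : F × F // a.1 * a.2 ≠ 0 ∧ ¬ a.1 ≠ a.2} = k + 1 := by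
      rw [← hne]
      apply Nat.card_congr
      refine ⟨fun a => ⟨a.1.1, fun h => a.2.1 (by rw [h, zero_mul])⟩,
        fun x => ⟨(x.1, x.1), mul_ne_zero x.2 x.2, by simp⟩, fun a => ?_, fun x => rfl⟩
      obtain ⟨⟨a1, a2⟩, hne', hd⟩ := a
      simp only [not_not] at hd
      simp [hd]
    rw [hW, hdiag] at h1
    have : (k + 1) * (k + 1) = k * (k + 1) + (k + 1) := by ring
    omega
  -- transfer the main set through e and the key iff
  have step1 : Nat.card {v : Fin 4 → F // v 0 * v 1 + v 2 * v 3 = 0 ∧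
        (v 0) ^ 2 * v 1 + v 0 * (v 1) ^ 2 + (v 2) ^ 2 * v 3 + v 2 * (v 3) ^ 2 = 0}
      = Nat.card {p : (F × F) × (F × F) //
          (p.1.1 * p.1.2 = 0 ∧ p.2.1 * p.2.2 = 0) ∨
          ((p.1.1 * p.1.2 ≠ 0 ∧ p.2.1 = p.1.1 ∧ p.2.2 = p.1.2) ∨
           (p.1.1 * p.1.2 ≠ 0 ∧ p.1.1 ≠ p.1.2 ∧ p.2.1 = p.1.2 ∧ p.2.2 = p.1.1)) } := by
    apply Nat.card_congr
    apply Equiv.subtypeEquiv e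
    intro v
    exact key_iff F (v 0) (v 1) (v 2) (v 3)
  rw [step1]
  rw [card_or_aux _ _ (by rintro ⟨⟨x1, y1⟩, ⟨x2, y2⟩⟩ ⟨h0, _⟩ (⟨hn, _⟩ | ⟨hn, _⟩) <;> exact hn h0)]
  rw [card_or_aux _ _ (by
    rintro ⟨⟨x1, y1⟩, ⟨x2, y2⟩⟩ ⟨-, h1, h1'⟩ ⟨-, hne', h3, h3'⟩
    exact hne' (by simp only at h1 h1' h3 h3'; rw [← h1, h3]))]
  -- first piece: product of two Z's
  have c0 : Nat.card {p : (F × F) × (F × F) // p.1.1 * p.1.2 = 0 ∧ p.2.1 * p.2.2 = 0}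
      = (2 * k + 3) * (2 * k + 3) := by
    rw [Nat.card_congr (Equiv.subtypeProdEquivProd (p := fun a : F × F => a.1 * a.2 = 0)
      (q := fun a : F × F => a.1 * a.2 = 0)), Nat.card_prod, hZ]
  have c1 : Nat.card {p : (F × F) × (F × F) //
      p.1.1 * p.1.2 ≠ 0 ∧ p.2.1 = p.1.1 ∧ p.2.2 = p.1.2} = (k + 1) * (k + 1) := by
    rw [← hW]
    apply Nat.card_congr
    refine ⟨fun p => ⟨p.1.1, p.2.1⟩, fun a => ⟨(a.1, a.1), a.2, rfl, rfl⟩, ?_, fun a => rfl⟩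
    rintro ⟨⟨⟨x1, y1⟩, ⟨x2, y2⟩⟩, hn, h1, h2⟩
    simp only at h1 h2
    subst h1 h2
    rfl
  have c2 : Nat.card {p : (F × F) × (F × F) //
      p.1.1 * p.1.2 ≠ 0 ∧ p.1.1 ≠ p.1.2 ∧ p.2.1 = p.1.2 ∧ p.2.2 = p.1.1} = k * (k + 1) := by
    rw [← hW']
    apply Nat.card_congr
    refine ⟨fun p => ⟨p.1.1, p.2.1, p.2.2.1⟩,
      fun a => ⟨(a.1, (a.1.2, a.1.1)), a.2.1, a.2.2, rfl, rfl⟩, ?_, fun a => rfl⟩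
    rintro ⟨⟨⟨x1, y1⟩, ⟨x2, y2⟩⟩, hn, hd, h1, h2⟩
    simp only at h1 h2
    subst h1 h2
    rfl
  rw [c0, c1, c2, hk]
  have hle : 9 * (k + 2) ≤ 6 * (k + 2) ^ 2 := by nlinarith
  zify [hle]
  ring
end

section
/- Let F be a finite field of characteristic 2 with q elements. Then the number of tuples (x₁,y₁,x₂,y₂) ∈ F⁴ satisfying x₁²y₁ + x₁y₁² + x₂²y₂ + x₂y₂² = 0 and x₁² + y₁² + x₁y₁ + x₂y₂ = 0 is at most 2q² + 2q − 3. -/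
open Finset Polynomial

/-- **Upper bound for the cardinality of `V(g₂, h₂)`**: over a finite field `F` of
characteristic 2 with `q` elements, the number of `(x₁, y₁, x₂, y₂) ∈ F⁴` with
`x₁²y₁ + x₁y₁² + x₂²y₂ + x₂y₂² = 0` and `x₁² + y₁² + x₁y₁ + x₂y₂ = 0` is at most
`2q² + 2q - 3`. -/
theorem stmt_12 (F : Type*) [Field F] [Fintype F] [CharP F 2] :
    Nat.card {v : Fin 4 → F //
        (v 0) ^ 2 * v 1 + v 0 * (v 1) ^ 2 + (v 2) ^ 2 * v 3 + v 2 * (v 3) ^ 2 = 0 ∧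
        (v 0) ^ 2 + (v 1) ^ 2 + v 0 * v 1 + v 2 * v 3 = 0}
      ≤ 2 * (Fintype.card F) ^ 2 + 2 * Fintype.card F - 3 := by
  classical
  have two0 : (2 : F) = 0 := CharTwo.two_eq_zero
  set q := Fintype.card F with hq
  clear_value q
  have hq2 : 2 ≤ q := hq ▸ Fintype.one_lt_card
  rw [Nat.card_eq_fintype_card, Fintype.card_subtype]
  set T : Finset (Fin 4 → F) := univ.filter (fun v =>
      (v 0) ^ 2 * v 1 + v 0 * (v 1) ^ 2 + (v 2) ^ 2 * v 3 + v 2 * (v 3) ^ 2 = 0 ∧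
        (v 0) ^ 2 + (v 1) ^ 2 + v 0 * v 1 + v 2 * v 3 = 0) with hT
  clear_value T
  have key : T.card = ∑ p : F × F, (T.filter (fun v => (v 0, v 1) = p)).card :=
    Finset.card_eq_sum_card_fiberwise (fun v _ => mem_univ _)
  -- membership facts
  have mem_fib : ∀ (p : F × F) (v : Fin 4 → F),
      v ∈ T.filter (fun v => (v 0, v 1) = p) →
      v 0 = p.1 ∧ v 1 = p.2 ∧ v 2 * v 3 = p.1 ^ 2 + p.1 * p.2 + p.2 ^ 2 ∧
        v 2 ^ 2 * v 3 + v 2 * v 3 ^ 2 = p.1 ^ 2 * p.2 + p.1 * p.2 ^ 2 := by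
    intro p v hv
    simp only [hT, mem_filter, mem_univ, true_and, Prod.ext_iff] at hv
    obtain ⟨⟨h1, h2⟩, e0, e1⟩ := hv
    refine ⟨e0, e1, ?_, ?_⟩
    · rw [e0, e1] at h2
      linear_combination h2 - (p.1 ^ 2 + p.1 * p.2 + p.2 ^ 2) * two0
    · rw [e0, e1] at h1
      linear_combination h1 - (p.1 ^ 2 * p.2 + p.1 * p.2 ^ 2) * two0
  -- fiber at (0,0)
  have fib00 : (T.filter (fun v => (v 0, v 1) = ((0 : F), (0 : F)))).card ≤ 2 * q - 1 := by
    have hcard : ((({(0 : F)} : Finset F) ×ˢ (univ : Finset F)) ∪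
        ((univ : Finset F) ×ˢ ({(0 : F)} : Finset F))).card = 2 * q - 1 := by
      have hinter : (({(0 : F)} : Finset F) ×ˢ (univ : Finset F)) ∩
          ((univ : Finset F) ×ˢ ({(0 : F)} : Finset F)) = {((0 : F), (0 : F))} := by
        ext z
        simp [Prod.ext_iff, eq_comm]
      have := Finset.card_union_add_card_inter
        ((({(0 : F)} : Finset F) ×ˢ (univ : Finset F)))
        ((univ : Finset F) ×ˢ ({(0 : F)} : Finset F))
      rw [hinter] at this
      simp only [card_singleton, Finset.card_product, card_univ] at this
      clear key mem_fib hT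
      omega
    rw [← hcard]
    apply Finset.card_le_card_of_injOn (fun v => (v 2, v 3))
    · intro v hv
      obtain ⟨e0, e1, h23, -⟩ := mem_fib _ v hv
      have : v 2 * v 3 = 0 := by rw [h23]; ring
      rcases mul_eq_zero.mp this with h | h <;> simp [h]
    · intro v hv w hw hvw
      obtain ⟨e0, e1, -, -⟩ := mem_fib _ v hv
      obtain ⟨f0, f1, -, -⟩ := mem_fib _ w hw
      simp only [Prod.ext_iff] at hvw
      funext i
      fin_cases i
      · simpa [f0] using e0
      · simpa [f1] using e1
      · exact hvw.1
      · exact hvw.2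
  -- other fibers
  have fibne : ∀ p : F × F, p ≠ ((0 : F), (0 : F)) →
      (T.filter (fun v => (v 0, v 1) = p)).card ≤ 2 := by
    intro p hp
    set d : F := p.1 ^ 2 + p.1 * p.2 + p.2 ^ 2 with hd
    clear_value d
    by_cases hd0 : d = 0
    · -- fiber is empty
      rw [hd] at hd0
      have hp1 : p.1 ≠ 0 := by
        intro h
        rw [h] at hd0
        have : p.2 ^ 2 = 0 := by linear_combination hd0
        have h2 : p.2 = 0 := by
          exact pow_eq_zero_iff (n := 2) (by norm_num) |>.mp this
        exact hp (Prod.ext h h2)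
      have hp2 : p.2 ≠ 0 := by
        intro h
        rw [h] at hd0
        have : p.1 ^ 2 = 0 := by linear_combination hd0
        have h1 : p.1 = 0 := pow_eq_zero_iff (n := 2) (by norm_num) |>.mp this
        exact hp (Prod.ext h1 h)
      have : T.filter (fun v => (v 0, v 1) = p) = ∅ := by
        rw [Finset.eq_empty_iff_forall_notMem]
        intro v hv
        obtain ⟨-, -, h23, hm⟩ := mem_fib _ v hv
        rw [hd0] at h23
        have hm0 : p.1 ^ 2 * p.2 + p.1 * p.2 ^ 2 = 0 := by
          rcases mul_eq_zero.mp h23 with h | h <;>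
            · rw [h] at hm; linear_combination -hm
        -- p1 p2 (p1 + p2) = 0, p1,p2 ≠ 0 so p1 + p2 = 0, p2 = p1
        have hsum : p.1 + p.2 = 0 := by
          have : p.1 * p.2 * (p.1 + p.2) = 0 := by linear_combination hm0
          rcases mul_eq_zero.mp this with h | h
          · rcases mul_eq_zero.mp h with h | h
            · exact absurd h hp1
            · exact absurd h hp2
          · exact h
        have hpp : p.2 = p.1 := by
          linear_combination hsum - p.1 * two0
        rw [hpp] at hd0
        have : p.1 ^ 2 = 0 := by linear_combination hd0 - p.1 ^ 2 * two0
        exact hp1 (pow_eq_zero_iff (n := 2) (by norm_num) |>.mp this)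
      rw [this]
      simp
    · -- quadratic bound
      set s : F := (p.1 ^ 2 * p.2 + p.1 * p.2 ^ 2) / d with hs
      set Q : F[X] := X ^ 2 + C s * X + C d with hQ
      have hdeg : Q.natDegree = 2 := by
        rw [hQ, show (X ^ 2 + C s * X + C d : F[X]) = C 1 * X ^ 2 + C s * X + C d by
          rw [map_one, one_mul]]
        exact Polynomial.natDegree_quadratic one_ne_zero
      have hQ0 : Q ≠ 0 := by
        intro h
        rw [h] at hdeg
        simp at hdeg
      have step : (T.filter (fun v => (v 0, v 1) = p)).card ≤ Q.roots.toFinset.card := by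
        apply Finset.card_le_card_of_injOn (fun v => v 2)
        · intro v hv
          obtain ⟨-, -, h23, hm⟩ := mem_fib _ v hv
          rw [← hd] at h23
          have hsumv : v 2 + v 3 = s := by
            rw [hs, eq_div_iff hd0]
            linear_combination hm - (v 2 + v 3) * h23
          rw [Finset.mem_coe, Multiset.mem_toFinset, mem_roots hQ0]
          have : v 2 ^ 2 + s * v 2 + d = 0 := by
            rw [← hsumv, ← h23]
            linear_combination (v 2 ^ 2 + v 2 * v 3) * two0
          simpa [hQ, Polynomial.IsRoot] using this
        · intro v hv w hw hvw
          simp only at hvw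
          obtain ⟨e0, e1, h23, -⟩ := mem_fib _ v hv
          obtain ⟨f0, f1, g23, -⟩ := mem_fib _ w hw
          rw [← hd] at h23 g23
          have hv2 : v 2 ≠ 0 := by
            intro h
            rw [h] at h23
            simp at h23
            exact hd0 h23.symm
          have h3 : v 3 = w 3 := by
            apply mul_left_cancel₀ hv2
            rw [h23, hvw, g23]
          funext i
          fin_cases i
          · simpa [f0] using e0
          · simpa [f1] using e1
          · exact hvw
          · exact h3
      calc (T.filter (fun v => (v 0, v 1) = p)).card ≤ Q.roots.toFinset.card := step
        _ ≤ Multiset.card Q.roots := Multiset.toFinset_card_le _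
        _ ≤ Q.natDegree := Polynomial.card_roots' Q
        _ = 2 := hdeg
  -- assemble
  have hsplit : ∑ p : F × F, (T.filter (fun v => (v 0, v 1) = p)).card
      = (T.filter (fun v => (v 0, v 1) = ((0 : F), (0 : F)))).card
        + ∑ p ∈ (univ : Finset (F × F)).erase ((0 : F), (0 : F)),
            (T.filter (fun v => (v 0, v 1) = p)).card :=
    (Finset.add_sum_erase _ _ (mem_univ _)).symm
  have hrest : ∑ p ∈ (univ : Finset (F × F)).erase ((0 : F), (0 : F)),
      (T.filter (fun v => (v 0, v 1) = p)).card ≤ (q ^ 2 - 1) * 2 := by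
    have := Finset.sum_le_card_nsmul ((univ : Finset (F × F)).erase ((0 : F), (0 : F)))
      (fun p => (T.filter (fun v => (v 0, v 1) = p)).card) 2
      (fun p hp => fibne p (Finset.ne_of_mem_erase hp))
    have hcard : ((univ : Finset (F × F)).erase ((0 : F), (0 : F))).card = q ^ 2 - 1 := by
      rw [Finset.card_erase_of_mem (mem_univ _), card_univ, Fintype.card_prod, ← hq, sq]
    rw [hcard] at this
    simpa [smul_eq_mul] using this
  have hk : 1 ≤ q ^ 2 := Nat.one_le_pow _ _ (lt_of_lt_of_le (by norm_num) hq2)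
  calc T.card = _ := key
    _ = _ := hsplit
    _ ≤ (2 * q - 1) + (q ^ 2 - 1) * 2 := add_le_add fib00 hrest
    _ ≤ 2 * q ^ 2 + 2 * q - 3 := by clear key mem_fib hT fib00 fibne hsplit hrest; omega
end

section
/- Let F be a finite field of characteristic 2 with q elements. Then the number of pairs (α,β) ∈ F² with α ≠ 0 and β ≠ 0 for which there exist x, y ∈ F with x²y + xy² = α and xy = β equals (q−1)(q−2)/2, which equals q(q−3)/2 + 1. -/
open Finset

private theorem char2_eq_of_add_eq_zero {F : Type*} [Field F] [CharP F 2] {a b : F}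
    (h : a + b = 0) : a = b := by
  simpa using CharTwo.add_eq_iff_eq_add.1 h

/-- **Cardinality of `A* = {(α, β) ∈ Im ψ : α ≠ 0, β ≠ 0}`** for
`ψ(x, y) = (x²y + xy², xy)` over a finite field `F` of characteristic 2 with `q`
elements: it equals `(q-1)(q-2)/2 = q(q-3)/2 + 1`. -/
theorem stmt_14 (F : Type*) [Field F] [Fintype F] [CharP F 2] :
    (Nat.card {ab : F × F // ab.1 ≠ 0 ∧ ab.2 ≠ 0 ∧
        ∃ x y : F, x ^ 2 * y + x * y ^ 2 = ab.1 ∧ x * y = ab.2} : ℤ)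
      = ((Fintype.card F : ℤ) - 1) * ((Fintype.card F : ℤ) - 2) / 2 ∧
    ((Fintype.card F : ℤ) - 1) * ((Fintype.card F : ℤ) - 2) / 2
      = (Fintype.card F : ℤ) * ((Fintype.card F : ℤ) - 3) / 2 + 1 := by
  classical
  have h2z : (2 : F) = 0 := CharTwo.two_eq_zero
  set q := Fintype.card F with hqdef
  obtain ⟨n, -, hq⟩ := FiniteField.card F 2
  have hq2 : 2 ≤ q := Fintype.one_lt_card
  have hqe : 2 ∣ q := by rw [hqdef, hq]; exact dvd_pow_self 2 n.pos.ne'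
  obtain ⟨m, hm⟩ : ∃ m, q = m + 2 := ⟨q - 2, by omega⟩
  obtain ⟨k, hk⟩ : ∃ k, m = 2 * k := ⟨m / 2, by omega⟩
  set f : F × F → F × F := fun p => (p.1 ^ 2 * p.2 + p.1 * p.2 ^ 2, p.1 * p.2) with hf
  set T : Finset (F × F) := ((univ : Finset F).erase 0).offDiag with hT
  -- each fiber of `f` on `T` consists of exactly a pair and its swap
  have fiber : ∀ p ∈ T, T.filter (fun r => f r = f p) = {p, (p.2, p.1)} := by
    rintro ⟨x₀, y₀⟩ hp
    rw [Finset.mem_offDiag] at hp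
    obtain ⟨hx₀, hy₀, hne⟩ := hp
    rw [Finset.mem_erase] at hx₀ hy₀
    ext ⟨x, y⟩
    simp only [Finset.mem_filter, T, Finset.mem_offDiag, Finset.mem_erase, Finset.mem_univ,
      Finset.mem_insert, Finset.mem_singleton, Prod.mk.injEq, f, true_and, and_true]
    constructor
    · rintro ⟨⟨hx, hy, hxy⟩, h1, h2⟩
      have hs : x + y = x₀ + y₀ := by
        have h1' : x₀ * y₀ * (x + y) = x₀ * y₀ * (x₀ + y₀) := by
          linear_combination h1 - (x + y) * h2
        exact mul_left_cancel₀ (mul_ne_zero hx₀.1 hy₀.1) h1'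
      have hz : (x + x₀) * (x + y₀) = 0 := by
        linear_combination (x ^ 2 + x * y) * h2z - x * hs - h2
      rcases mul_eq_zero.1 hz with h | h
      · left
        have hxx : x = x₀ := char2_eq_of_add_eq_zero h
        exact ⟨hxx, by rw [hxx] at hs; exact add_left_cancel hs⟩
      · right
        have hxx : x = y₀ := char2_eq_of_add_eq_zero h
        refine ⟨hxx, ?_⟩
        rw [hxx, add_comm x₀ y₀] at hs
        exact add_left_cancel hs
    · rintro (⟨hx, hy⟩ | ⟨hx, hy⟩)
      · subst hx; subst hy
        exact ⟨⟨hx₀.1, hy₀.1, hne⟩, rfl, rfl⟩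
      · subst hx; subst hy
        exact ⟨⟨hy₀.1, hx₀.1, fun h => hne h.symm⟩, by ring, by ring⟩
  -- hence `T.card = 2 * (image).card`
  have hcard : T.card = (T.image f).card * 2 := by
    rw [Finset.card_eq_sum_card_image f T]
    have h2 : ∀ b ∈ T.image f, (T.filter fun a => f a = b).card = 2 := by
      intro b hb
      obtain ⟨p, hpT, rfl⟩ := Finset.mem_image.1 hb
      rw [fiber p hpT, Finset.card_insert_of_notMem, Finset.card_singleton]
      simp only [Finset.mem_singleton]
      intro h
      exact (Finset.mem_offDiag.1 hpT).2.2 (congrArg Prod.fst h)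
    rw [Finset.sum_congr rfl h2, Finset.sum_const, smul_eq_mul]
  -- `T.card = (q-1)² - (q-1)`
  have hT1 : ((univ : Finset F).erase 0).card = q - 1 := by
    rw [Finset.card_erase_of_mem (Finset.mem_univ 0), Finset.card_univ]
  have hTcard : T.card = (q - 1) * (q - 1) - (q - 1) := by
    rw [hT, Finset.offDiag_card, hT1]
  -- identify the target set with the image
  have hset : (univ.filter (fun ab : F × F => ab.1 ≠ 0 ∧ ab.2 ≠ 0 ∧
      ∃ x y : F, x ^ 2 * y + x * y ^ 2 = ab.1 ∧ x * y = ab.2)) = T.image f := by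
    ext ⟨a, b⟩
    simp only [Finset.mem_filter, Finset.mem_univ, true_and, Finset.mem_image,
      Finset.mem_offDiag, Finset.mem_erase, Prod.exists, T, f, Prod.mk.injEq]
    constructor
    · rintro ⟨ha, hb, x, y, h1, h2⟩
      have hx : x ≠ 0 := fun h => hb (by rw [← h2, h, zero_mul])
      have hy : y ≠ 0 := fun h => hb (by rw [← h2, h, mul_zero])
      have hxy : x ≠ y := by
        rintro rfl
        apply ha
        rw [← h1]
        linear_combination (x ^ 2 * x) * h2z
      exact ⟨x, y, ⟨⟨hx, trivial⟩, ⟨hy, trivial⟩, hxy⟩, h1, h2⟩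
    · rintro ⟨x, y, ⟨⟨hx, -⟩, ⟨hy, -⟩, hxy⟩, h1, h2⟩
      have hsum : x + y ≠ 0 := fun h => hxy (char2_eq_of_add_eq_zero h)
      refine ⟨?_, ?_, x, y, h1, h2⟩
      · rw [← h1]
        have : x ^ 2 * y + x * y ^ 2 = x * y * (x + y) := by ring
        rw [this]
        exact mul_ne_zero (mul_ne_zero hx hy) hsum
      · rw [← h2]; exact mul_ne_zero hx hy
  -- translate Nat.card
  have hnat : Nat.card {ab : F × F // ab.1 ≠ 0 ∧ ab.2 ≠ 0 ∧
      ∃ x y : F, x ^ 2 * y + x * y ^ 2 = ab.1 ∧ x * y = ab.2} = (T.image f).card := by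
    rw [Nat.card_eq_fintype_card, Fintype.card_subtype, hset]
  set c := (T.image f).card with hc
  have hc2 : c * 2 = (m + 1) * m := by
    have h1 : c * 2 = (q - 1) * (q - 1) - (q - 1) := by rw [← hcard, hTcard]
    have e : q - 1 = m + 1 := by omega
    rw [e] at h1
    have h2 : (m + 1) * (m + 1) = (m + 1) * m + (m + 1) := by ring
    omega
  have hqz : (q : ℤ) = 2 * (k : ℤ) + 2 := by
    have : q = 2 * k + 2 := by omega
    exact_mod_cast this
  have hcz : (c : ℤ) * 2 = (2 * (k : ℤ) + 1) * (2 * k) := by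
    rw [hk] at hc2; exact_mod_cast hc2
  constructor
  · rw [hnat, hqz,
      show (2 * (k : ℤ) + 2 - 1) * (2 * (k : ℤ) + 2 - 2) = (c : ℤ) * 2 from by
        linear_combination -hcz,
      Int.mul_ediv_cancel _ two_ne_zero]
  · rw [hqz]
    rw [show (2 * (k : ℤ) + 2 - 1) * (2 * (k : ℤ) + 2 - 2) = (2 * k ^ 2 + k) * 2 from by ring,
      show (2 * (k : ℤ) + 2) * (2 * (k : ℤ) + 2 - 3) = (2 * k ^ 2 + k - 1) * 2 from by ring,
      Int.mul_ediv_cancel _ two_ne_zero, Int.mul_ediv_cancel _ two_ne_zero]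
    ring
end
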